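/- arXiv:1202.2439 — 3 statements merged into one kernel-verified Lean document; each statement's English description precedes it below -/
import Mathlib

section
/- For every θ > 0 and every n ≥ 2, the depth D_n^{(θ)} of the n-th inserted node in a Hoppe tree with parameter θ satisfies the distributional identity D_n^{(θ)} = 1 + Σ_{i=1}^{n-2} B_i in distribution, where B_1, …, B_{n-2} are independent Bernoulli random variables with P(B_i = 1) = 1 − P(B_i = 0) = 1/(θ + i) for i = 1, …, n−2. -/
open MeasureTheory ProbabilityTheory Real Filter Topology

noncomputable section

/-- Depth of node `i` in the Hoppe tree grown from the parent choices `U`: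
`U k ω` is the parent of node `k + 2` (a node in `{1, …, k + 1}`, almost surely);
node `1` is the root. The `min` clipping is irrelevant almost surely. -/
def hoppeDepth {Ω : Type*} (U : ℕ → Ω → ℕ) (ω : Ω) : ℕ → ℕ
  | 0 => 0
  | 1 => 0
  | n + 2 => hoppeDepth U ω (min (U n ω) (n + 1)) + 1
  decreasing_by omega

/-- The parent choices of a Hoppe tree with parameter `θ`: `U k` is the (random) parent
of node `k + 2`, the choices being independent, node `k + 2` choosing its parent among
nodes `1, …, k + 1`, namely the root `1` with probability `θ / (θ + k)` and each other
node with probability `1 / (θ + k)`. -/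
structure IsHoppeParents {Ω : Type*} [MeasurableSpace Ω] (θ : ℝ) (μ : Measure Ω)
    (U : ℕ → Ω → ℕ) : Prop where
  meas : ∀ k, Measurable (U k)
  indep : iIndepFun U μ
  root : ∀ k : ℕ, μ {ω | U k ω = 1} = ENNReal.ofReal (θ / (θ + k))
  nonroot : ∀ k j : ℕ, 2 ≤ j → j ≤ k + 1 → μ {ω | U k ω = j} = ENNReal.ofReal (1 / (θ + k))
  range : ∀ k : ℕ, μ {ω | 1 ≤ U k ω ∧ U k ω ≤ k + 1} = 1

/-- Height of the Hoppe tree with `n` nodes: maximal depth over nodes `1, …, n`. -/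
def hoppeHeight {Ω : Type*} (U : ℕ → Ω → ℕ) (ω : Ω) (n : ℕ) : ℕ :=
  (Finset.Icc 1 n).sup (fun i => hoppeDepth U ω i)

/-- Internal path length of the Hoppe tree with `n` nodes: sum of the depths of
nodes `1, …, n`. -/
def hoppePathLength {Ω : Type*} (U : ℕ → Ω → ℕ) (ω : Ω) (n : ℕ) : ℕ :=
  ∑ i ∈ Finset.Icc 1 n, hoppeDepth U ω i

/-- Number of leaves of the Hoppe tree with `n` nodes: nodes `j ∈ {1, …, n}` that are
the parent of no node `k ∈ {2, …, n}`. -/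
def hoppeLeafCount {Ω : Type*} (U : ℕ → Ω → ℕ) (ω : Ω) (n : ℕ) : ℕ :=
  (@Finset.filter ℕ (fun j => ∀ k ∈ Finset.Icc 2 n, U (k - 2) ω ≠ j)
    (fun _ => Finset.decidableDforallFinset) (Finset.Icc 1 n)).card

namespace HoppeAux

/-- deterministic analogue of `hoppeDepth` -/
def depthF (f : ℕ → ℕ) : ℕ → ℕ
  | 0 => 0
  | 1 => 0
  | n + 2 => depthF f (min (f n) (n + 1)) + 1
  decreasing_by omega

lemma hoppeDepth_eq_depthF {Ω : Type*} (U : ℕ → Ω → ℕ) (ω : Ω) (m : ℕ) :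
    hoppeDepth U ω m = depthF (fun k => U k ω) m := by
  induction m using Nat.strong_induction_on with
  | _ m ih =>
    match m with
    | 0 => simp [hoppeDepth, depthF]
    | 1 => simp [hoppeDepth, depthF]
    | n + 2 =>
      rw [hoppeDepth, depthF, ih _ (by omega)]

lemma depthF_congr {f g : ℕ → ℕ} {m : ℕ} (h : ∀ k < m, f k = g k) :
    ∀ j, j ≤ m + 1 → depthF f j = depthF g j := by
  intro j
  induction j using Nat.strong_induction_on with
  | _ j ih =>
    intro hj
    match j with
    | 0 => simp [depthF]
    | 1 => simp [depthF]
    | i + 2 =>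
      rw [depthF, depthF, h i (by omega), ih (min (g i) (i + 1)) (by omega) (by omega)]

lemma measurable_hoppeDepth {Ω : Type*} [MeasurableSpace Ω] (U : ℕ → Ω → ℕ)
    (hU : ∀ k, Measurable (U k)) (m : ℕ) :
    Measurable (fun ω => hoppeDepth U ω m) := by
  have h : (fun ω => hoppeDepth U ω m)
      = (fun v : Fin m → ℕ => depthF (fun k => if h : k < m then v ⟨k, h⟩ else 0) m)
        ∘ (fun ω (i : Fin m) => U i ω) := by
    funext ω
    simp only [Function.comp]
    rw [hoppeDepth_eq_depthF]
    exact (depthF_congr (fun k hk => by simp [hk]) m (Nat.le_succ m)).symm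
  rw [h]
  exact (measurable_of_countable _).comp (measurable_pi_lambda _ fun i => hU i)

/-- the common law kernel: `rker θ m d` is the probability that `1` plus a sum of `m`
independent Bernoulli variables of parameters `1/(θ+1), …, 1/(θ+m)` equals `d`. -/
def rker (θ : ℝ) : ℕ → ℕ → ENNReal
  | 0, d => if d = 1 then 1 else 0
  | m + 1, d => rker θ m d * ENNReal.ofReal ((θ + m) / (θ + m + 1))
      + rker θ m (d - 1) * ENNReal.ofReal (1 / (θ + m + 1))

lemma rker_zero (θ : ℝ) : ∀ m, rker θ m 0 = 0
  | 0 => by simp [rker]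
  | m + 1 => by simp [rker, rker_zero θ m]

lemma split_measure {Ω α : Type*} [MeasurableSpace Ω] [MeasurableSpace α] (μ : Measure Ω)
    (T : Ω → α) (Y : Ω → ℕ) (hT : Measurable T) (hY : Measurable Y)
    (hind : IndepFun T Y μ) (s : Finset ℕ) (hs : μ {ω | Y ω ∉ s} = 0)
    (E : Set Ω) (S : ℕ → Set α) (hS : ∀ j, MeasurableSet (S j))
    (hE : ∀ j ∈ s, E ∩ {ω | Y ω = j} = T ⁻¹' (S j) ∩ Y ⁻¹' {j}) :
    μ E = ∑ j ∈ s, μ (T ⁻¹' (S j)) * μ (Y ⁻¹' {j}) := by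
  have hYs : MeasurableSet (Y ⁻¹' (↑s : Set ℕ)) := hY ((Set.to_countable _).measurableSet)
  have key : E ∩ Y ⁻¹' (↑s : Set ℕ) = ⋃ j ∈ s, (T ⁻¹' (S j) ∩ Y ⁻¹' {j}) := by
    ext ω
    simp only [Set.mem_inter_iff, Set.mem_preimage, Finset.mem_coe, Set.mem_iUnion,
      Set.mem_singleton_iff, exists_prop]
    constructor
    · rintro ⟨hωE, hωs⟩
      have h2 : ω ∈ T ⁻¹' (S (Y ω)) ∩ Y ⁻¹' {Y ω} := by
        rw [← hE _ hωs]; exact ⟨hωE, rfl⟩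
      exact ⟨Y ω, hωs, h2.1, rfl⟩
    · rintro ⟨j, hj, h1, h2⟩
      have h3 : ω ∈ E ∩ {ω | Y ω = j} := by
        rw [hE j hj]; exact ⟨h1, h2⟩
      exact ⟨h3.1, by rw [h3.2]; exact hj⟩
  have hmeas : ∀ j, MeasurableSet (T ⁻¹' (S j) ∩ Y ⁻¹' {j}) :=
    fun j => (hT (hS j)).inter (hY (measurableSet_singleton j))
  have hdisj : (↑s : Set ℕ).PairwiseDisjoint (fun j => T ⁻¹' (S j) ∩ Y ⁻¹' {j}) := by
    intro a _ b _ hab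
    refine Set.disjoint_left.mpr ?_
    rintro ω ⟨_, ha⟩ ⟨_, hb⟩
    exact hab (by rw [← ha, ← hb])
  calc μ E = μ (E ∩ Y ⁻¹' (↑s : Set ℕ)) + μ (E \ Y ⁻¹' (↑s : Set ℕ)) :=
        (measure_inter_add_diff E hYs).symm
    _ = μ (E ∩ Y ⁻¹' (↑s : Set ℕ)) := by
        have h0 : μ (E \ Y ⁻¹' (↑s : Set ℕ)) = 0 :=
          measure_mono_null (fun ω hω => hω.2) hs
        rw [h0, add_zero]
    _ = ∑ j ∈ s, μ (T ⁻¹' (S j) ∩ Y ⁻¹' {j}) := by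
        rw [key, measure_biUnion_finset hdisj (fun j _ => hmeas j)]
    _ = ∑ j ∈ s, μ (T ⁻¹' (S j)) * μ (Y ⁻¹' {j}) :=
        Finset.sum_congr rfl fun j _ =>
          hind.measure_inter_preimage_eq_mul _ _ (hS j) (measurableSet_singleton j)

lemma mulA {x : ℝ} (hx : 0 < x) :
    ENNReal.ofReal (x + 1) * ENNReal.ofReal (x / (x + 1)) = ENNReal.ofReal x := by
  rw [← ENNReal.ofReal_mul (by linarith)]
  congr 1
  field_simp

lemma mulB {x : ℝ} (hx : 0 < x) :
    ENNReal.ofReal (x + 1) * ENNReal.ofReal (1 / (x + 1)) = 1 := by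
  rw [← ENNReal.ofReal_mul (by linarith), mul_one_div, div_self (by linarith),
    ENNReal.ofReal_one]

lemma bkey (θ : ℝ) (hθ : 0 < θ) (m : ℕ) (d : ℕ) :
    ENNReal.ofReal θ * (if d = 1 then 1 else 0)
      + ∑ j ∈ Finset.Icc 2 (m + 2), rker θ (j - 2) (d - 1)
    = ENNReal.ofReal (θ + m + 1) * rker θ (m + 1) d := by
  induction m with
  | zero =>
    have h2 : Finset.Icc 2 (0 + 2) = {2} := by rfl
    rw [h2, Finset.sum_singleton]
    show ENNReal.ofReal θ * (if d = 1 then 1 else 0) + rker θ 0 (d - 1)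
      = ENNReal.ofReal (θ + (0:ℕ) + 1) * rker θ (0 + 1) d
    rw [Nat.cast_zero, add_zero]
    rw [show rker θ (0+1) d = rker θ 0 d * ENNReal.ofReal ((θ + (0:ℕ)) / (θ + (0:ℕ) + 1))
      + rker θ 0 (d - 1) * ENNReal.ofReal (1 / (θ + (0:ℕ) + 1)) from rfl]
    rw [Nat.cast_zero, add_zero, mul_add, mul_left_comm, mulA hθ,
      mul_left_comm, mulB hθ, mul_one]
    simp only [rker]
    ring
  | succ m ih =>
    have hx : (0:ℝ) < θ + (m + 1 : ℕ) := by positivity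
    have hsum : ∑ j ∈ Finset.Icc 2 (m + 1 + 2), rker θ (j - 2) (d - 1)
        = (∑ j ∈ Finset.Icc 2 (m + 2), rker θ (j - 2) (d - 1)) + rker θ (m + 1) (d - 1) := by
      rw [show m + 1 + 2 = m + 2 + 1 from rfl, ← Finset.insert_Icc_right_eq_Icc_add_one (a := 2) (b := m + 2) (by omega), Finset.sum_insert (by simp)]
      rw [show m + 2 + 1 - 2 = m + 1 from by omega]
      ring
    rw [hsum, ← add_assoc, ih]
    rw [show rker θ (m + 1 + 1) d = rker θ (m + 1) d * ENNReal.ofReal ((θ + (m + 1 : ℕ)) / (θ + (m + 1 : ℕ) + 1))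
      + rker θ (m + 1) (d - 1) * ENNReal.ofReal (1 / (θ + (m + 1 : ℕ) + 1)) from rfl]
    rw [mul_add, mul_left_comm, mulA hx, mul_left_comm, mulB hx, mul_one]
    push_cast
    ring_nf

lemma hoppeDepth_two {Ω : Type*} (U : ℕ → Ω → ℕ) (ω : Ω) : hoppeDepth U ω 2 = 1 := by
  rw [show (2:ℕ) = 0 + 2 from rfl, hoppeDepth]
  rcases Nat.le_one_iff_eq_zero_or_eq_one.mp (min_le_right (U 0 ω) (0 + 1)) with h | h <;>
    rw [h] <;> simp [hoppeDepth]

lemma tree_law {Ω : Type*} [MeasurableSpace Ω] {θ : ℝ} (hθ : 0 < θ) (μ : Measure Ω)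
    [IsProbabilityMeasure μ] (U : ℕ → Ω → ℕ) (hU : IsHoppeParents θ μ U) :
    ∀ n, 2 ≤ n → ∀ d, μ {ω | hoppeDepth U ω n = d} = rker θ (n - 2) d := by
  have main : ∀ n, 2 ≤ n → ∀ j, 2 ≤ j → j ≤ n → ∀ d,
      μ {ω | hoppeDepth U ω j = d} = rker θ (j - 2) d := by
    intro n hn
    induction n, hn using Nat.le_induction with
    | base =>
      intro j hj2 hjn d
      have hj : j = 2 := le_antisymm hjn hj2
      subst hj
      have hset : {ω : Ω | hoppeDepth U ω 2 = d} = {ω : Ω | 1 = d} := by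
        ext ω; simp [hoppeDepth_two]
      rw [hset]
      by_cases h : d = 1
      · subst h; simp [rker]
      · have h1 : ¬ ((1:ℕ) = d) := fun hh => h hh.symm
        simp [h1, rker, h]
    | succ n hn ih =>
      intro j hj2 hjn d
      rcases Nat.lt_or_ge j (n + 1) with hlt | hge
      · exact ih j hj2 (by omega) d
      have hj : j = n + 1 := by omega
      subst hj
      obtain ⟨m, rfl⟩ : ∃ m, n = m + 2 := ⟨n - 2, by omega⟩
      rw [show m + 2 + 1 - 2 = m + 1 from by omega]
      rcases Nat.eq_zero_or_pos d with rfl | hd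
      · have hset : {ω : Ω | hoppeDepth U ω (m + 2 + 1) = 0} = ∅ := by
          ext ω
          simp only [Set.mem_setOf_eq, Set.mem_empty_iff_false, iff_false]
          rw [show m + 2 + 1 = (m + 1) + 2 from rfl, hoppeDepth]
          omega
        rw [hset, measure_empty, rker_zero]
      -- main case : d ≥ 1
      have hg : ∀ jj, jj ≤ m + 2 → ∀ ω : Ω,
          depthF (fun k => if _ : k ∈ Finset.range (m + 1) then U k ω else 0) jj
          = hoppeDepth U ω jj := by
        intro jj hjj ω
        rw [hoppeDepth_eq_depthF]
        exact depthF_congr (m := m + 1)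
          (fun k hk => by simp [Finset.mem_range, hk]) jj (by omega)
      have hdisjF : Disjoint (Finset.range (m + 1)) ({m + 1} : Finset ℕ) := by
        simp only [Finset.disjoint_left, Finset.mem_range, Finset.mem_singleton]
        omega
      have hind : IndepFun (fun ω (i : (Finset.range (m + 1) : Finset ℕ)) => U i ω)
          (U (m + 1)) μ := by
        have h2 := (hU.indep.indepFun_finset (Finset.range (m + 1)) {m + 1} hdisjF
          hU.meas).comp measurable_id
          (measurable_pi_apply (⟨m + 1, Finset.mem_singleton_self _⟩ :
            (({m + 1} : Finset ℕ) : Type)))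
        exact h2
      have hsnull : μ {ω | U (m + 1) ω ∉ Finset.Icc 1 (m + 2)} = 0 := by
        have hmeasA : MeasurableSet {ω | U (m + 1) ω ∈ Finset.Icc 1 (m + 2)} :=
          hU.meas (m + 1) ((Set.to_countable {x : ℕ | x ∈ Finset.Icc 1 (m + 2)}).measurableSet)
        have hc : {ω | U (m + 1) ω ∉ Finset.Icc 1 (m + 2)}
            = {ω | U (m + 1) ω ∈ Finset.Icc 1 (m + 2)}ᶜ := rfl
        rw [hc, prob_compl_eq_zero_iff hmeasA, ← hU.range (m + 1)]
        congr 1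
        ext ω
        simp only [Set.mem_setOf_eq, Finset.mem_Icc]
      have hE : ∀ jj ∈ Finset.Icc 1 (m + 2),
          {ω : Ω | hoppeDepth U ω (m + 2 + 1) = d} ∩ {ω | U (m + 1) ω = jj}
            = (fun ω (i : (Finset.range (m + 1) : Finset ℕ)) => U i ω) ⁻¹'
                ((fun v : (Finset.range (m + 1) : Finset ℕ) → ℕ =>
                  depthF (fun k => if h : k ∈ Finset.range (m + 1) then v ⟨k, h⟩ else 0) jj)
                  ⁻¹' {d - 1})
              ∩ (U (m + 1)) ⁻¹' {jj} := by
        intro jj hjj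
        rw [Finset.mem_Icc] at hjj
        ext ω
        simp only [Set.mem_inter_iff, Set.mem_setOf_eq, Set.mem_preimage,
          Set.mem_singleton_iff]
        rw [hg jj (by omega) ω]
        constructor
        · rintro ⟨h1, h2⟩
          refine ⟨?_, h2⟩
          rw [show m + 2 + 1 = (m + 1) + 2 from rfl, hoppeDepth, h2,
            min_eq_left (by omega)] at h1
          omega
        · rintro ⟨h1, h2⟩
          refine ⟨?_, h2⟩
          rw [show m + 2 + 1 = (m + 1) + 2 from rfl, hoppeDepth, h2,
            min_eq_left (by omega)]
          omega
      have hsplit := split_measure μ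
        (fun ω (i : (Finset.range (m + 1) : Finset ℕ)) => U i ω) (U (m + 1))
        (measurable_pi_lambda _ fun i => hU.meas i) (hU.meas (m + 1))
        hind (Finset.Icc 1 (m + 2)) hsnull
        {ω : Ω | hoppeDepth U ω (m + 2 + 1) = d}
        (fun jj => (fun v : (Finset.range (m + 1) : Finset ℕ) → ℕ =>
          depthF (fun k => if h : k ∈ Finset.range (m + 1) then v ⟨k, h⟩ else 0) jj)
          ⁻¹' {d - 1})
        (fun jj => (measurable_of_countable _) (measurableSet_singleton _))
        hE
      have hterm : ∀ jj ∈ Finset.Icc 1 (m + 2),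
          μ ((fun ω (i : (Finset.range (m + 1) : Finset ℕ)) => U i ω) ⁻¹'
              ((fun v : (Finset.range (m + 1) : Finset ℕ) → ℕ =>
                depthF (fun k => if h : k ∈ Finset.range (m + 1) then v ⟨k, h⟩ else 0) jj)
                ⁻¹' {d - 1}))
            = μ {ω : Ω | hoppeDepth U ω jj = d - 1} := by
        intro jj hjj
        rw [Finset.mem_Icc] at hjj
        congr 1
        ext ω
        simp only [Set.mem_preimage, Set.mem_singleton_iff, Set.mem_setOf_eq]
        rw [hg jj (by omega) ω]
      have hD1 : {ω : Ω | hoppeDepth U ω 1 = d - 1} = {ω : Ω | (0:ℕ) = d - 1} := by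
        ext ω; simp [hoppeDepth]
      have h01 : μ {ω : Ω | hoppeDepth U ω 1 = d - 1}
          = (if d = 1 then (1:ENNReal) else 0) := by
        rw [hD1]
        by_cases h : d = 1
        · subst h
          simp
        · have h0 : ¬ ((0:ℕ) = d - 1) := by omega
          simp [h0, h]
      have hcastθ : ENNReal.ofReal (θ / (θ + ((m + 1 : ℕ) : ℝ)))
          = ENNReal.ofReal (θ / (θ + (m : ℝ) + 1)) := by
        congr 1; push_cast; ring_nf
      have hcast1 : ENNReal.ofReal (1 / (θ + ((m + 1 : ℕ) : ℝ)))
          = ENNReal.ofReal (1 / (θ + (m : ℝ) + 1)) := by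
        congr 1; push_cast; ring_nf
      have hx : (0:ℝ) < θ + (m : ℝ) := by positivity
      calc μ {ω : Ω | hoppeDepth U ω (m + 2 + 1) = d}
          = ∑ jj ∈ Finset.Icc 1 (m + 2),
              μ {ω : Ω | hoppeDepth U ω jj = d - 1} * μ ((U (m + 1)) ⁻¹' {jj}) := by
            rw [hsplit]
            exact Finset.sum_congr rfl (fun jj hjj => by rw [hterm jj hjj])
        _ = (if d = 1 then (1:ENNReal) else 0) * ENNReal.ofReal (θ / (θ + (m : ℝ) + 1))
            + ∑ jj ∈ Finset.Icc 2 (m + 2),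
                rker θ (jj - 2) (d - 1) * ENNReal.ofReal (1 / (θ + (m : ℝ) + 1)) := by
            rw [← Finset.insert_Icc_add_one_left_eq_Icc (by omega : 1 ≤ m + 2),
              Finset.sum_insert (by simp), show (1:ℕ) + 1 = 2 from rfl]
            congr 1
            · rw [show (U (m + 1)) ⁻¹' {1} = {ω : Ω | U (m + 1) ω = 1} from rfl,
                hU.root (m + 1), h01, hcastθ]
            · apply Finset.sum_congr rfl
              intro jj hjj
              rw [Finset.mem_Icc] at hjj
              rw [show (U (m + 1)) ⁻¹' {jj} = {ω : Ω | U (m + 1) ω = jj} from rfl,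
                hU.nonroot (m + 1) jj hjj.1 (by omega), ih jj hjj.1 (by omega) (d - 1),
                hcast1]
        _ = rker θ (m + 1) d := by
            have hbk := bkey θ hθ m d
            have hmul := congrArg (fun z => z * ENNReal.ofReal (1 / (θ + (m : ℝ) + 1))) hbk
            rw [add_mul, Finset.sum_mul] at hmul
            have e1 : ENNReal.ofReal θ * (if d = 1 then (1:ENNReal) else 0)
                  * ENNReal.ofReal (1 / (θ + (m:ℝ) + 1))
                = (if d = 1 then (1:ENNReal) else 0)
                  * ENNReal.ofReal (θ / (θ + (m:ℝ) + 1)) := by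
              rw [mul_comm (ENNReal.ofReal θ), mul_assoc, ← ENNReal.ofReal_mul hθ.le,
                mul_one_div]
            have e2 : ENNReal.ofReal (θ + (m:ℝ) + 1) * rker θ (m + 1) d
                  * ENNReal.ofReal (1 / (θ + (m:ℝ) + 1))
                = rker θ (m + 1) d := by
              rw [mul_comm (ENNReal.ofReal (θ + (m:ℝ) + 1)), mul_assoc, mulB hx, mul_one]
            rw [e1, e2] at hmul
            exact hmul
  intro n hn d
  exact main n hn n hn le_rfl d

lemma bern_law {Ω' : Type*} [MeasurableSpace Ω'] {θ : ℝ} (hθ : 0 < θ) (μ' : Measure Ω')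
    [IsProbabilityMeasure μ'] (B : ℕ → Ω' → ℕ) (hBmeas : ∀ i, Measurable (B i))
    (hBindep : iIndepFun B μ') (N : ℕ)
    (hB1 : ∀ i : ℕ, 1 ≤ i → i ≤ N → μ' {ω | B i ω = 1} = ENNReal.ofReal (1 / (θ + i)))
    (hB0 : ∀ i : ℕ, 1 ≤ i → i ≤ N → μ' {ω | B i ω = 0} = 1 - ENNReal.ofReal (1 / (θ + i))) :
    ∀ m, m ≤ N → ∀ d, μ' {ω | 1 + ∑ i ∈ Finset.Icc 1 m, B i ω = d} = rker θ m d := by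
  intro m
  induction m with
  | zero =>
    intro _ d
    have hempty : Finset.Icc 1 0 = (∅ : Finset ℕ) := by rfl
    rw [hempty]
    simp only [Finset.sum_empty, add_zero]
    by_cases h : d = 1
    · subst h; simp [rker]
    · have h1 : ¬ ((1:ℕ) = d) := fun hh => h hh.symm
      simp [h1, rker, h]
  | succ m ih =>
    intro hm d
    have hmN : m ≤ N := by omega
    have hp_pos : (0:ℝ) < θ + ((m + 1 : ℕ) : ℝ) := by positivity
    have hp_le : ENNReal.ofReal (1 / (θ + ((m + 1 : ℕ) : ℝ))) ≤ 1 := by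
      apply ENNReal.ofReal_le_one.mpr
      rw [div_le_one hp_pos]
      have : (0:ℝ) ≤ ((m + 1 : ℕ) : ℝ) - 1 := by push_cast; linarith [Nat.cast_nonneg (α := ℝ) m]
      linarith
    -- independence
    have hni : (m + 1) ∉ Finset.Icc 1 m := by simp
    have h0 := hBindep.indepFun_finset_sum_of_notMem hBmeas hni
    have hXeq : (fun ω => 1 + ∑ i ∈ Finset.Icc 1 m, B i ω)
        = (fun x => 1 + x) ∘ (∑ i ∈ Finset.Icc 1 m, B i) := by
      funext ω; simp [Finset.sum_apply]
    have hind : IndepFun (fun ω => 1 + ∑ i ∈ Finset.Icc 1 m, B i ω) (B (m + 1)) μ' := by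
      rw [hXeq]
      exact h0.comp (measurable_id.const_add 1) measurable_id
    -- null set
    have hmeas0 : MeasurableSet {ω | B (m + 1) ω = 0} :=
      hBmeas (m + 1) (measurableSet_singleton 0)
    have hmeas1 : MeasurableSet {ω | B (m + 1) ω = 1} :=
      hBmeas (m + 1) (measurableSet_singleton 1)
    have hsnull : μ' {ω | B (m + 1) ω ∉ ({0, 1} : Finset ℕ)} = 0 := by
      have hu : {ω | B (m + 1) ω ∈ ({0, 1} : Finset ℕ)}
          = {ω | B (m + 1) ω = 0} ∪ {ω | B (m + 1) ω = 1} := by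
        ext ω; simp
      have hd01 : Disjoint {ω | B (m + 1) ω = 0} {ω | B (m + 1) ω = 1} := by
        refine Set.disjoint_left.mpr ?_
        rintro ω h0' h1'
        simp only [Set.mem_setOf_eq] at h0' h1'
        omega
      have hc : {ω | B (m + 1) ω ∉ ({0, 1} : Finset ℕ)}
          = {ω | B (m + 1) ω ∈ ({0, 1} : Finset ℕ)}ᶜ := rfl
      rw [hc, prob_compl_eq_zero_iff (by rw [hu]; exact hmeas0.union hmeas1), hu,
        measure_union hd01 hmeas1, hB0 (m + 1) (by omega) (by omega),
        hB1 (m + 1) (by omega) (by omega)]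
      exact tsub_add_cancel_of_le hp_le
    -- set equality
    have hsumsplit : ∀ ω, ∑ i ∈ Finset.Icc 1 (m + 1), B i ω
        = (∑ i ∈ Finset.Icc 1 m, B i ω) + B (m + 1) ω := by
      intro ω
      rw [← Finset.insert_Icc_right_eq_Icc_add_one (by omega), Finset.sum_insert (by simp)]
      ring
    have hE : ∀ j ∈ ({0, 1} : Finset ℕ),
        {ω | 1 + ∑ i ∈ Finset.Icc 1 (m + 1), B i ω = d} ∩ {ω | B (m + 1) ω = j}
          = (fun ω => 1 + ∑ i ∈ Finset.Icc 1 m, B i ω) ⁻¹'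
              ((fun j => if j = 0 then ({d} : Set ℕ) else {d - 1}) j)
            ∩ (B (m + 1)) ⁻¹' {j} := by
      intro j hj
      rcases Finset.mem_insert.mp hj with rfl | hj1
      · ext ω
        simp only [Set.mem_inter_iff, Set.mem_setOf_eq, Set.mem_preimage, reduceIte,
          Set.mem_singleton_iff, hsumsplit ω]
        constructor
        · rintro ⟨h1, h2⟩; exact ⟨by omega, h2⟩
        · rintro ⟨h1, h2⟩; exact ⟨by omega, h2⟩
      · rcases Finset.mem_singleton.mp hj1 with rfl
        ext ω
        simp only [Set.mem_inter_iff, Set.mem_setOf_eq, Set.mem_preimage, one_ne_zero,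
          if_false, reduceIte, Set.mem_singleton_iff, hsumsplit ω]
        constructor
        · rintro ⟨h1, h2⟩; exact ⟨by omega, h2⟩
        · rintro ⟨h1, h2⟩; exact ⟨by omega, h2⟩
    have hsplit := split_measure μ'
      (fun ω => 1 + ∑ i ∈ Finset.Icc 1 m, B i ω) (B (m + 1))
      ((Finset.measurable_sum _ (fun i _ => hBmeas i)).const_add 1) (hBmeas (m + 1))
      hind ({0, 1} : Finset ℕ) hsnull
      {ω | 1 + ∑ i ∈ Finset.Icc 1 (m + 1), B i ω = d}
      (fun j => if j = 0 then ({d} : Set ℕ) else {d - 1})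
      (fun j => by split_ifs <;> exact measurableSet_singleton _)
      hE
    rw [hsplit, Finset.sum_pair (by norm_num : (0:ℕ) ≠ 1)]
    norm_num
    have hpre0 : (fun ω => 1 + ∑ i ∈ Finset.Icc 1 m, B i ω) ⁻¹' ({d} : Set ℕ)
        = {ω | 1 + ∑ i ∈ Finset.Icc 1 m, B i ω = d} := rfl
    have hpre1 : (fun ω => 1 + ∑ i ∈ Finset.Icc 1 m, B i ω) ⁻¹' ({d - 1} : Set ℕ)
        = {ω | 1 + ∑ i ∈ Finset.Icc 1 m, B i ω = d - 1} := rfl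
    have hpreY0 : (B (m + 1)) ⁻¹' ({0} : Set ℕ) = {ω | B (m + 1) ω = 0} := rfl
    have hpreY1 : (B (m + 1)) ⁻¹' ({1} : Set ℕ) = {ω | B (m + 1) ω = 1} := rfl
    rw [hpre0, hpre1, hpreY0, hpreY1, ih hmN d, ih hmN (d - 1),
      hB0 (m + 1) (by omega) (by omega), hB1 (m + 1) (by omega) (by omega)]
    -- algebra
    have hcast : ((m + 1 : ℕ) : ℝ) = (m : ℝ) + 1 := by push_cast; ring
    rw [hcast]
    have hxm : (0:ℝ) < θ + (m : ℝ) := by positivity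
    have h1p : (1 : ENNReal) - ENNReal.ofReal (1 / (θ + ((m : ℝ) + 1)))
        = ENNReal.ofReal ((θ + (m : ℝ)) / (θ + (m : ℝ) + 1)) := by
      rw [show (θ + (m:ℝ)) / (θ + (m:ℝ) + 1) = 1 - 1 / (θ + (m:ℝ) + 1) from by
        field_simp; ring]
      rw [ENNReal.ofReal_sub _ (by positivity), ENNReal.ofReal_one, ← add_assoc]
    rw [← add_assoc] at *
    rw [h1p]
    rw [show rker θ (m + 1) d = rker θ m d * ENNReal.ofReal ((θ + (m:ℕ)) / (θ + (m:ℕ) + 1))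
      + rker θ m (d - 1) * ENNReal.ofReal (1 / (θ + (m:ℕ) + 1)) from rfl]

end HoppeAux

/-- The depth of the `n`-th node of a Hoppe tree with parameter `θ` is distributed as
`1 + ∑_{i=1}^{n-2} B_i` with `B_i` independent Bernoulli of parameter `1 / (θ + i)`. -/
theorem hoppe_depth_distributional_identity
    {Ω Ω' : Type*} [MeasurableSpace Ω] [MeasurableSpace Ω']
    (θ : ℝ) (hθ : 0 < θ) (n : ℕ) (hn : 2 ≤ n)
    (μ : Measure Ω) [IsProbabilityMeasure μ] (U : ℕ → Ω → ℕ) (hU : IsHoppeParents θ μ U)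
    (μ' : Measure Ω') [IsProbabilityMeasure μ']
    (B : ℕ → Ω' → ℕ) (hBmeas : ∀ i, Measurable (B i))
    (hBindep : iIndepFun B μ')
    (hB1 : ∀ i : ℕ, 1 ≤ i → i ≤ n - 2 →
      μ' {ω | B i ω = 1} = ENNReal.ofReal (1 / (θ + i)))
    (hB0 : ∀ i : ℕ, 1 ≤ i → i ≤ n - 2 →
      μ' {ω | B i ω = 0} = 1 - ENNReal.ofReal (1 / (θ + i))) :
    Measure.map (fun ω => hoppeDepth U ω n) μ
      = Measure.map (fun ω => 1 + ∑ i ∈ Finset.Icc 1 (n - 2), B i ω) μ' := by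
  have hmeas1 : Measurable (fun ω => hoppeDepth U ω n) :=
    HoppeAux.measurable_hoppeDepth U hU.meas n
  have hmeas2 : Measurable (fun ω' => 1 + ∑ i ∈ Finset.Icc 1 (n - 2), B i ω') :=
    (Finset.measurable_sum _ (fun i _ => hBmeas i)).const_add 1
  apply Measure.ext_of_singleton
  intro d
  rw [Measure.map_apply hmeas1 (measurableSet_singleton d),
    Measure.map_apply hmeas2 (measurableSet_singleton d)]
  have h1 : (fun ω => hoppeDepth U ω n) ⁻¹' {d} = {ω | hoppeDepth U ω n = d} := rfl
  have h2 : (fun ω' => 1 + ∑ i ∈ Finset.Icc 1 (n - 2), B i ω') ⁻¹' {d}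
      = {ω' | 1 + ∑ i ∈ Finset.Icc 1 (n - 2), B i ω' = d} := rfl
  rw [h1, h2, HoppeAux.tree_law hθ μ U hU n hn d,
    HoppeAux.bern_law hθ μ' B hBmeas hBindep (n - 2) hB1 hB0 (n - 2) le_rfl d]

end
end

section
/- For every θ > 0, the total variation distance between the law of the depth D_n^{(θ)} of the n-th inserted node in a Hoppe tree with parameter θ and the Poisson distribution with parameter E[D_n^{(θ)}] is O(1/log n) as n → ∞; that is, there exist C > 0 and n_0 such that for all n ≥ n_0, d_TV(L(D_n^{(θ)}), Poisson(E[D_n^{(θ)}])) ≤ C/log n. -/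
open MeasureTheory ProbabilityTheory Real Filter Topology

noncomputable section

/-- Total variation distance between two measures on `ℕ`. -/
def tvDist (μ ν : Measure ℕ) : ℝ := ⨆ A : Set ℕ, |(μ A).toReal - (ν A).toReal|


namespace HoppeAux

/-- success probability of the `i`-th Bernoulli. -/
def hp (θ : ℝ) (i : ℕ) : ℝ := 1 / (θ + i + 1)

/-- pmf of the sum of `N` independent Bernoullis with parameters `hp θ i`, `i < N`. -/
def bq (θ : ℝ) : ℕ → ℕ → ℝ
  | 0, 0 => 1
  | 0, _+1 => 0
  | N+1, 0 => bq θ N 0 * (1 - hp θ N)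
  | N+1, k+1 => bq θ N (k+1) * (1 - hp θ N) + bq θ N k * hp θ N

variable {θ : ℝ}

lemma hp_pos (hθ : 0 < θ) (i : ℕ) : 0 < hp θ i := by
  have : (0:ℝ) < θ + i + 1 := by positivity
  exact div_pos one_pos this

lemma hp_le_one (hθ : 0 < θ) (i : ℕ) : hp θ i ≤ 1 := by
  rw [hp, div_le_one (by positivity)]
  have : (0:ℝ) ≤ (i:ℝ) := Nat.cast_nonneg i
  linarith

lemma bq_nonneg (hθ : 0 < θ) : ∀ N k, 0 ≤ bq θ N k := by
  intro N
  induction N with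
  | zero => intro k; cases k <;> simp [bq]
  | succ N ih =>
    intro k
    have h1 : 0 ≤ 1 - hp θ N := by linarith [hp_le_one (θ := θ) hθ N]
    have h2 : 0 ≤ hp θ N := (hp_pos hθ N).le
    cases k with
    | zero => exact mul_nonneg (ih 0) h1
    | succ k => exact add_nonneg (mul_nonneg (ih (k+1)) h1) (mul_nonneg (ih k) h2)

lemma bq_support : ∀ N k, N < k → bq θ N k = 0 := by
  intro N
  induction N with
  | zero =>
    intro k hk
    cases k with
    | zero => omega
    | succ k => rfl
  | succ N ih =>
    intro k hk
    cases k with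
    | zero => omega
    | succ k =>
      have h1 : bq θ N (k+1) = 0 := ih (k+1) (by omega)
      have h2 : bq θ N k = 0 := ih k (by omega)
      show bq θ N (k+1) * (1 - hp θ N) + bq θ N k * hp θ N = 0
      rw [h1, h2]; ring

lemma bq_sum : ∀ N, ∑ k ∈ Finset.range (N+1), bq θ N k = 1 := by
  intro N
  induction N with
  | zero => simp [bq]
  | succ N ih =>
    have hs : ∑ k ∈ Finset.range (N+2), bq θ (N+1) k
        = (∑ k ∈ Finset.range (N+1), bq θ (N+1) (k+1)) + bq θ (N+1) 0 :=
      Finset.sum_range_succ' _ _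
    have e1 : ∑ k ∈ Finset.range (N+1), bq θ (N+1) (k+1)
        = (1 - hp θ N) * (∑ k ∈ Finset.range (N+1), bq θ N (k+1))
          + hp θ N * (∑ k ∈ Finset.range (N+1), bq θ N k) := by
      rw [Finset.mul_sum, Finset.mul_sum, ← Finset.sum_add_distrib]
      exact Finset.sum_congr rfl (fun k _ => by show bq θ (N+1) (k+1) = _; rw [bq]; ring)
    have hs2 : ∑ k ∈ Finset.range (N+2), bq θ N k
        = (∑ k ∈ Finset.range (N+1), bq θ N (k+1)) + bq θ N 0 :=
      Finset.sum_range_succ' _ _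
    have e3 : ∑ k ∈ Finset.range (N+2), bq θ N k = 1 := by
      rw [Finset.sum_range_succ, ih, bq_support N (N+1) (by omega)]; ring
    have key1 : ∑ k ∈ Finset.range (N+1), bq θ N (k+1) = 1 - bq θ N 0 := by
      rw [← e3, hs2]; ring
    have h0 : bq θ (N+1) 0 = bq θ N 0 * (1 - hp θ N) := rfl
    rw [hs, e1, key1, ih, h0]; ring

lemma bq_mean : ∀ N, ∑ k ∈ Finset.range (N+1), (k:ℝ) * bq θ N k
    = ∑ i ∈ Finset.range N, hp θ i := by
  intro N
  induction N with
  | zero => simp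
  | succ N ih =>
    have hs : ∑ k ∈ Finset.range (N+2), (k:ℝ) * bq θ (N+1) k
        = (∑ k ∈ Finset.range (N+1), ((k:ℝ)+1) * bq θ (N+1) (k+1))
          + (0:ℝ) * bq θ (N+1) 0 := by
      rw [Finset.sum_range_succ' (fun k => (k:ℝ) * bq θ (N+1) k) (N+1)]
      push_cast; ring_nf
    have e1 : ∑ k ∈ Finset.range (N+1), ((k:ℝ)+1) * bq θ (N+1) (k+1)
        = (1 - hp θ N) * (∑ k ∈ Finset.range (N+1), ((k:ℝ)+1) * bq θ N (k+1))
          + hp θ N * (∑ k ∈ Finset.range (N+1), ((k:ℝ)+1) * bq θ N k) := by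
      rw [Finset.mul_sum, Finset.mul_sum, ← Finset.sum_add_distrib]
      exact Finset.sum_congr rfl (fun k _ => by
        show ((k:ℝ)+1) * bq θ (N+1) (k+1) = _; rw [bq]; ring)
    have hs2 : ∑ k ∈ Finset.range (N+2), (k:ℝ) * bq θ N k
        = (∑ k ∈ Finset.range (N+1), ((k:ℝ)+1) * bq θ N (k+1))
          + (0:ℝ) * bq θ N 0 := by
      rw [Finset.sum_range_succ' (fun k => (k:ℝ) * bq θ N k) (N+1)]
      push_cast; ring_nf
    have e3 : ∑ k ∈ Finset.range (N+2), (k:ℝ) * bq θ N k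
        = ∑ i ∈ Finset.range N, hp θ i := by
      rw [Finset.sum_range_succ, bq_support N (N+1) (by omega), ih]; ring
    have eA : ∑ k ∈ Finset.range (N+1), ((k:ℝ)+1) * bq θ N (k+1)
        = ∑ i ∈ Finset.range N, hp θ i := by
      rw [← e3, hs2]; ring
    have eB : ∑ k ∈ Finset.range (N+1), ((k:ℝ)+1) * bq θ N k
        = (∑ i ∈ Finset.range N, hp θ i) + 1 := by
      have : ∑ k ∈ Finset.range (N+1), ((k:ℝ)+1) * bq θ N k
          = (∑ k ∈ Finset.range (N+1), (k:ℝ) * bq θ N k)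
            + ∑ k ∈ Finset.range (N+1), bq θ N k := by
        rw [← Finset.sum_add_distrib]
        exact Finset.sum_congr rfl (fun k _ => by ring)
      rw [this, ih, bq_sum]
    rw [hs, e1, eA, eB, Finset.sum_range_succ]; ring

lemma bqB0 (hθ : 0 < θ) : ∀ N, (θ + N) * bq θ N 0 = θ := by
  intro N
  induction N with
  | zero => simp [bq]
  | succ N ih =>
    have hpd : (0:ℝ) < θ + N + 1 := by positivity
    show (θ + (N+1:ℕ)) * (bq θ N 0 * (1 - hp θ N)) = θ
    push_cast
    have hkey : (θ + (N:ℝ) + 1) * (1 - hp θ N) = θ + N := by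
      rw [hp]; field_simp; ring
    calc (θ + ((N:ℝ) + 1)) * (bq θ N 0 * (1 - hp θ N))
        = ((θ + (N:ℝ) + 1) * (1 - hp θ N)) * bq θ N 0 := by ring
      _ = (θ + N) * bq θ N 0 := by rw [hkey]
      _ = θ := ih

lemma bqBS (hθ : 0 < θ) : ∀ N m, (θ + N) * bq θ N (m+1) = ∑ i ∈ Finset.range N, bq θ i m := by
  intro N
  induction N with
  | zero => intro m; simp [bq]
  | succ N ih =>
    intro m
    have hpd : (0:ℝ) < θ + N + 1 := by positivity
    show (θ + (N+1:ℕ)) * (bq θ N (m+1) * (1 - hp θ N) + bq θ N m * hp θ N) = _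
    push_cast
    have h1 : (θ + (N:ℝ) + 1) * (1 - hp θ N) = θ + N := by rw [hp]; field_simp; ring
    have h2 : (θ + (N:ℝ) + 1) * hp θ N = 1 := by
      rw [hp]; field_simp
    rw [Finset.sum_range_succ, ← ih m]
    calc (θ + ((N:ℝ) + 1)) * (bq θ N (m+1) * (1 - hp θ N) + bq θ N m * hp θ N)
        = ((θ + (N:ℝ) + 1) * (1 - hp θ N)) * bq θ N (m+1)
          + ((θ + (N:ℝ) + 1) * hp θ N) * bq θ N m := by ring
      _ = (θ + N) * bq θ N (m+1) + bq θ N m := by rw [h1, h2]; ring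

lemma hp_sq_sum (hθ : 0 < θ) (N : ℕ) : ∑ i ∈ Finset.range N, (hp θ i)^2 ≤ 1/θ := by
  have tel : ∀ M : ℕ, ∑ i ∈ Finset.range M, (1/(θ+i) - 1/(θ+i+1)) = 1/θ - 1/(θ+M) := by
    intro M
    induction M with
    | zero => simp
    | succ M ih => rw [Finset.sum_range_succ, ih]; push_cast; ring
  have key : ∀ i ∈ Finset.range N, (hp θ i)^2 ≤ 1/(θ+i) - 1/(θ+i+1) := by
    intro i _
    have h1 : (0:ℝ) < θ + i := by positivity
    have h2 : (0:ℝ) < θ + i + 1 := by positivity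
    have h3 : (θ+i) * (θ+i+1) ≤ (θ+i+1)^2 := by nlinarith
    have h4 : 1/(θ+i+1)^2 ≤ 1/((θ+i)*(θ+i+1)) :=
      one_div_le_one_div_of_le (by positivity) h3
    have h5 : 1/((θ+i)*(θ+i+1)) = 1/(θ+i) - 1/(θ+i+1) := by
      field_simp
      ring
    rw [hp, div_pow, one_pow]
    linarith
  calc ∑ i ∈ Finset.range N, (hp θ i)^2
      ≤ ∑ i ∈ Finset.range N, (1/(θ+i) - 1/(θ+i+1)) := Finset.sum_le_sum key
    _ = 1/θ - 1/(θ+N) := tel N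
    _ ≤ 1/θ := by
        have h6 : (0:ℝ) < θ + N := by positivity
        have := one_div_nonneg.mpr h6.le
        linarith

lemma log_le_harmonic : ∀ N : ℕ, Real.log (N+1) ≤ ∑ i ∈ Finset.range N, (1:ℝ)/(i+1) := by
  intro N
  induction N with
  | zero => simp
  | succ N ih =>
    have h1 : (0:ℝ) < (N:ℝ) + 1 := by positivity
    have h2 : (0:ℝ) < (N:ℝ) + 2 := by positivity
    have heq : ((N:ℝ)+2)/((N:ℝ)+1) = 1 + 1/((N:ℝ)+1) := by field_simp; ring
    have hlog : Real.log ((N:ℝ)+2) - Real.log ((N:ℝ)+1) ≤ 1/((N:ℝ)+1) := by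
      rw [← Real.log_div (ne_of_gt h2) (ne_of_gt h1)]
      have h7 := Real.log_le_sub_one_of_pos (div_pos h2 h1)
      rw [heq] at h7 ⊢
      linarith
    rw [Finset.sum_range_succ]
    have harg : ((N:ℕ)+1:ℝ) + 1 = (N:ℝ) + 2 := by push_cast; ring
    push_cast
    rw [show (N:ℝ) + 1 + 1 = (N:ℝ) + 2 by ring]
    push_cast at ih
    linarith

open scoped Classical

/-- indicator of a set of naturals -/
def ind (A : Set ℕ) (j : ℕ) : ℝ := if j ∈ A then 1 else 0

lemma ind_nonneg (A : Set ℕ) (j : ℕ) : 0 ≤ ind A j := by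
  rw [ind]; split <;> norm_num

lemma ind_le_one (A : Set ℕ) (j : ℕ) : ind A j ≤ 1 := by
  rw [ind]; split <;> norm_num

lemma ind_add_compl (A : Set ℕ) (j : ℕ) : ind A j + ind Aᶜ j = 1 := by
  rw [ind, ind]
  by_cases h : j ∈ A <;> simp [h]

/-- Poisson pmf with real parameter -/
def pois (ν : ℝ) (j : ℕ) : ℝ := Real.exp (-ν) * ν^j / (Nat.factorial j)

/-- cdf-type partial sum -/
def TT (ν : ℝ) (k : ℕ) : ℝ := ∑ j ∈ Finset.range (k+1), pois ν j

/-- truncated sum over A -/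
def SA (ν : ℝ) (A : Set ℕ) (k : ℕ) : ℝ := ∑ j ∈ Finset.range (k+1), ind A j * pois ν j

/-- Poisson measure of A -/
def PoA (ν : ℝ) (A : Set ℕ) : ℝ := ∑' j, ind A j * pois ν j

/-- normalizing constants -/
def cc (ν : ℝ) (k : ℕ) : ℝ := (Nat.factorial k) * Real.exp ν / ν^(k+1)

/-- tail sums -/
def UU (ν : ℝ) (k : ℕ) : ℝ := ∑' j, pois ν (j + (k+1))

/-- the Chen-Stein solution for Poisson approximation -/
def steinG (ν : ℝ) (A : Set ℕ) : ℕ → ℝ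
  | 0 => 0
  | (k+1) => cc ν k * (SA ν A k - PoA ν A * TT ν k)

variable {ν : ℝ}

lemma pois_nonneg (hν : 0 < ν) (j : ℕ) : 0 ≤ pois ν j := by
  rw [pois]; positivity

lemma hasSum_pois (hν : 0 < ν) : HasSum (pois ν) 1 := by
  have h := poissonPMFRealSum ν.toNNReal
  have hc : (ν.toNNReal : ℝ) = ν := Real.coe_toNNReal ν hν.le
  have e : pois ν = fun j => Real.exp (-ν) * ν^j / (Nat.factorial j) := rfl
  rw [e]
  simpa [poissonPMFReal, hc] using h

lemma summable_pois (hν : 0 < ν) : Summable (pois ν) := (hasSum_pois hν).summable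

lemma tsum_pois (hν : 0 < ν) : ∑' j, pois ν j = 1 := (hasSum_pois hν).tsum_eq

lemma summable_ind_pois (hν : 0 < ν) (A : Set ℕ) : Summable (fun j => ind A j * pois ν j) := by
  apply Summable.of_nonneg_of_le (fun j => mul_nonneg (ind_nonneg A j) (pois_nonneg hν j))
    (fun j => ?_) (summable_pois hν)
  calc ind A j * pois ν j ≤ 1 * pois ν j :=
        mul_le_mul_of_nonneg_right (ind_le_one A j) (pois_nonneg hν j)
    _ = pois ν j := one_mul _

lemma PoA_nonneg (hν : 0 < ν) (A : Set ℕ) : 0 ≤ PoA ν A :=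
  tsum_nonneg (fun j => mul_nonneg (ind_nonneg A j) (pois_nonneg hν j))

lemma PoA_le_one (hν : 0 < ν) (A : Set ℕ) : PoA ν A ≤ 1 := by
  rw [PoA, ← tsum_pois hν]
  apply Summable.tsum_le_tsum (fun j => ?_) (summable_ind_pois hν A) (summable_pois hν)
  calc ind A j * pois ν j ≤ 1 * pois ν j :=
        mul_le_mul_of_nonneg_right (ind_le_one A j) (pois_nonneg hν j)
    _ = pois ν j := one_mul _

lemma pois_rec (hν : 0 < ν) (j : ℕ) : ν * pois ν j = ((j:ℝ)+1) * pois ν (j+1) := by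
  rw [pois, pois]
  have hfac : ((Nat.factorial (j+1) : ℕ) : ℝ) = ((j:ℝ)+1) * (Nat.factorial j : ℝ) := by
    rw [Nat.factorial_succ]; push_cast; ring
  rw [hfac]
  have h1 : ((Nat.factorial j : ℕ) : ℝ) ≠ 0 := by
    exact_mod_cast Nat.factorial_ne_zero j
  have h2 : ((j:ℝ)+1) ≠ 0 := by positivity
  field_simp
  ring

lemma cc_pos (hν : 0 < ν) (k : ℕ) : 0 < cc ν k := by
  rw [cc]
  have : (0:ℝ) < (Nat.factorial k : ℝ) := by exact_mod_cast Nat.factorial_pos k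
  positivity

lemma cc_succ (hν : 0 < ν) (M : ℕ) : cc ν (M+1) = cc ν M * (((M:ℝ)+1)/ν) := by
  rw [cc, cc]
  have hfac : ((Nat.factorial (M+1) : ℕ) : ℝ) = ((M:ℝ)+1) * (Nat.factorial M : ℝ) := by
    rw [Nat.factorial_succ]; push_cast; ring
  rw [hfac]
  have hν' : ν ≠ 0 := ne_of_gt hν
  field_simp
  ring

lemma pois_mul_cc (hν : 0 < ν) (k : ℕ) : pois ν k * cc ν k = 1/ν := by
  rw [pois, cc]
  have h1 : ((Nat.factorial k : ℕ) : ℝ) ≠ 0 := by exact_mod_cast Nat.factorial_ne_zero k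
  have h2 : Real.exp (-ν) = (Real.exp ν)⁻¹ := Real.exp_neg ν
  have h3 : Real.exp ν ≠ 0 := Real.exp_ne_zero ν
  have hν' : ν ≠ 0 := ne_of_gt hν
  rw [h2]
  field_simp
  ring

lemma pois_mul_cc' (hν : 0 < ν) (M : ℕ) : pois ν (M+1) * cc ν M = 1/((M:ℝ)+1) := by
  rw [pois, cc]
  have hfac : ((Nat.factorial (M+1) : ℕ) : ℝ) = ((M:ℝ)+1) * (Nat.factorial M : ℝ) := by
    rw [Nat.factorial_succ]; push_cast; ring
  rw [hfac]
  have h1 : ((Nat.factorial M : ℕ) : ℝ) ≠ 0 := by exact_mod_cast Nat.factorial_ne_zero M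
  have h2 : Real.exp (-ν) = (Real.exp ν)⁻¹ := Real.exp_neg ν
  have h3 : Real.exp ν ≠ 0 := Real.exp_ne_zero ν
  have h4 : ((M:ℝ)+1) ≠ 0 := by positivity
  have hν' : ν ≠ 0 := ne_of_gt hν
  rw [h2]
  field_simp

/-- The Stein equation. -/
lemma stein_eq (hν : 0 < ν) (A : Set ℕ) (k : ℕ) :
    ν * steinG ν A (k+1) - (k:ℝ) * steinG ν A k = ind A k - PoA ν A := by
  cases k with
  | zero =>
    simp only [steinG, Nat.cast_zero, zero_mul, sub_zero]
    have h1 : ν * cc ν 0 * pois ν 0 = 1 := by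
      have := pois_mul_cc hν 0
      field_simp at this ⊢
      nlinarith [this]
    have hSA : SA ν A 0 = ind A 0 * pois ν 0 := by rw [SA]; simp
    have hTT : TT ν 0 = pois ν 0 := by rw [TT]; simp
    rw [hSA, hTT]
    calc ν * (cc ν 0 * (ind A 0 * pois ν 0 - PoA ν A * pois ν 0))
        = (ν * cc ν 0 * pois ν 0) * (ind A 0 - PoA ν A) := by ring
      _ = ind A 0 - PoA ν A := by rw [h1]; ring
  | succ M =>
    simp only [steinG]
    push_cast
    have hccc : ν * cc ν (M+1) = ((M:ℝ)+1) * cc ν M := by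
      rw [cc_succ hν M]
      field_simp
    have hSA : SA ν A (M+1) = SA ν A M + ind A (M+1) * pois ν (M+1) := by
      rw [SA, SA, Finset.sum_range_succ]
    have hTT : TT ν (M+1) = TT ν M + pois ν (M+1) := by
      rw [TT, TT, Finset.sum_range_succ]
    have hpc : ((M:ℝ)+1) * cc ν M * pois ν (M+1) = 1 := by
      have := pois_mul_cc' hν M
      have h4 : ((M:ℝ)+1) ≠ 0 := by positivity
      field_simp at this ⊢
      nlinarith [this]
    push_cast
    calc ν * (cc ν (M+1) * (SA ν A (M+1) - PoA ν A * TT ν (M+1)))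
        - ((M:ℝ)+1) * (cc ν M * (SA ν A M - PoA ν A * TT ν M))
        = (ν * cc ν (M+1)) * (SA ν A (M+1) - PoA ν A * TT ν (M+1))
          - ((M:ℝ)+1) * cc ν M * (SA ν A M - PoA ν A * TT ν M) := by ring
      _ = ((M:ℝ)+1) * cc ν M * ((SA ν A (M+1) - SA ν A M)
            - PoA ν A * (TT ν (M+1) - TT ν M)) := by rw [hccc]; ring
      _ = (((M:ℝ)+1) * cc ν M * pois ν (M+1)) * (ind A (M+1) - PoA ν A) := by
            rw [hSA, hTT]; ring
      _ = ind A (M+1) - PoA ν A := by rw [hpc]; ring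


lemma TT_nonneg (hν : 0 < ν) (k : ℕ) : 0 ≤ TT ν k :=
  Finset.sum_nonneg (fun j _ => pois_nonneg hν j)

lemma UU_nonneg (hν : 0 < ν) (k : ℕ) : 0 ≤ UU ν k :=
  tsum_nonneg (fun j => pois_nonneg hν _)

lemma summable_pois_add (hν : 0 < ν) (k : ℕ) : Summable (fun j => pois ν (j + k)) :=
  (summable_nat_add_iff k).2 (summable_pois hν)

lemma TT_add_UU (hν : 0 < ν) (k : ℕ) : TT ν k + UU ν k = 1 := by
  rw [TT, UU]
  rw [Summable.sum_add_tsum_nat_add (k+1) (summable_pois hν), tsum_pois hν]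

lemma I1 (hν : 0 < ν) (M : ℕ) :
    ν * TT ν M ≤ ((M:ℝ)+1) * (TT ν (M+1) - pois ν 0) := by
  have e1 : ν * TT ν M = ∑ i ∈ Finset.range (M+1), ((i:ℝ)+1) * pois ν (i+1) := by
    rw [TT, Finset.mul_sum]
    exact Finset.sum_congr rfl (fun i _ => pois_rec hν i)
  have e2 : ∑ i ∈ Finset.range (M+1), pois ν (i+1) = TT ν (M+1) - pois ν 0 := by
    have h := Finset.sum_range_succ' (pois ν) (M+1)
    rw [TT]; rw [h]; ring
  rw [e1, ← e2, Finset.mul_sum]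
  apply Finset.sum_le_sum
  intro i hi
  have hi' : (i:ℝ) + 1 ≤ (M:ℝ) + 1 := by
    have := Finset.mem_range.mp hi
    have : (i:ℝ) ≤ (M:ℝ) := by exact_mod_cast Nat.lt_succ_iff.mp this
    linarith
  exact mul_le_mul_of_nonneg_right hi' (pois_nonneg hν _)

lemma I2 (hν : 0 < ν) (M : ℕ) : ((M:ℝ)+1) * UU ν (M+1) ≤ ν * UU ν M := by
  have e1 : ν * UU ν M = ∑' (j : ℕ), (((j:ℝ)+(M:ℝ)+1)+1) * pois ν (j + (M+2)) := by
    rw [UU, ← tsum_mul_left]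
    apply tsum_congr
    intro j
    have h := pois_rec hν (j + (M+1))
    have hc : (((j + (M+1) : ℕ)):ℝ) = (j:ℝ) + (M:ℝ) + 1 := by push_cast; ring
    rw [hc] at h
    exact h
  have e2 : ((M:ℝ)+1) * UU ν (M+1) = ∑' (j : ℕ), ((M:ℝ)+1) * pois ν (j + (M+2)) := by
    rw [UU, ← tsum_mul_left]
  rw [e1, e2]
  apply Summable.tsum_le_tsum
  · intro j
    apply mul_le_mul_of_nonneg_right _ (pois_nonneg hν _)
    have : (0:ℝ) ≤ (j:ℝ) := Nat.cast_nonneg j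
    linarith
  · exact (summable_pois_add hν (M+2)).mul_left _
  · have : Summable (fun j => ν * pois ν (j + (M+1))) :=
      (summable_pois_add hν (M+1)).mul_left ν
    apply this.congr
    intro j
    have h := pois_rec hν (j + (M+1))
    have hc : (((j + (M+1) : ℕ)):ℝ) = (j:ℝ) + (M:ℝ) + 1 := by push_cast; ring
    rw [hc] at h
    exact h

/-- the per-site increment of the Stein solution -/
def alpha (ν : ℝ) (M : ℕ) (j : ℕ) : ℝ :=
  (cc ν (M+1) * (if j ≤ M+1 then (1:ℝ) else 0) - cc ν M * (if j ≤ M then (1:ℝ) else 0)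
    - (cc ν (M+1) * TT ν (M+1) - cc ν M * TT ν M)) * pois ν j

lemma beta_nonneg (hν : 0 < ν) (M : ℕ) :
    0 ≤ cc ν (M+1) * TT ν (M+1) - cc ν M * TT ν M := by
  have h1 : cc ν (M+1) * TT ν (M+1) = (cc ν M / ν) * (((M:ℝ)+1) * TT ν (M+1)) := by
    rw [cc_succ hν M]; field_simp
  have h2 : ν * TT ν M ≤ ((M:ℝ)+1) * TT ν (M+1) := by
    have := I1 hν M
    have h3 : ((M:ℝ)+1) * (TT ν (M+1) - pois ν 0) ≤ ((M:ℝ)+1) * TT ν (M+1) := by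
      have hM : (0:ℝ) ≤ (M:ℝ)+1 := by positivity
      nlinarith [pois_nonneg hν 0]
    linarith
  have h4 : 0 < cc ν M / ν := div_pos (cc_pos hν M) hν
  have h5 : (cc ν M / ν) * (ν * TT ν M) ≤ (cc ν M / ν) * (((M:ℝ)+1) * TT ν (M+1)) :=
    mul_le_mul_of_nonneg_left h2 h4.le
  have h6 : (cc ν M / ν) * (ν * TT ν M) = cc ν M * TT ν M := by
    field_simp
  linarith [h1 ▸ h5, h6 ▸ h5]

lemma alpha_nonpos (hν : 0 < ν) (M j : ℕ) (hj : j ≠ M+1) : alpha ν M j ≤ 0 := by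
  rcases lt_or_gt_of_ne hj with hlt | hgt
  · -- j ≤ M
    have hjM : j ≤ M := by omega
    have hjM1 : j ≤ M+1 := by omega
    rw [alpha, if_pos hjM1, if_pos hjM]
    apply mul_nonpos_of_nonpos_of_nonneg _ (pois_nonneg hν j)
    have hUT1 : (1:ℝ) - TT ν (M+1) = UU ν (M+1) := by linarith [TT_add_UU hν (M+1)]
    have hUT2 : (1:ℝ) - TT ν M = UU ν M := by linarith [TT_add_UU hν M]
    have key : cc ν (M+1) * UU ν (M+1) ≤ cc ν M * UU ν M := by
      have h1 : cc ν (M+1) * UU ν (M+1) = (cc ν M / ν) * (((M:ℝ)+1) * UU ν (M+1)) := by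
        rw [cc_succ hν M]; field_simp
      have h4 : 0 ≤ cc ν M / ν := (div_pos (cc_pos hν M) hν).le
      have h5 := mul_le_mul_of_nonneg_left (I2 hν M) h4
      have h6 : (cc ν M / ν) * (ν * UU ν M) = cc ν M * UU ν M := by field_simp
      linarith [h1 ▸ h5, h6 ▸ h5]
    have e1 : cc ν (M+1) * UU ν (M+1) = cc ν (M+1) - cc ν (M+1) * TT ν (M+1) := by
      rw [← hUT1]; ring
    have e2 : cc ν M * UU ν M = cc ν M - cc ν M * TT ν M := by
      rw [← hUT2]; ring
    linarith
  · -- j ≥ M+2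
    have h1 : ¬ (j ≤ M+1) := by omega
    have h2 : ¬ (j ≤ M) := by omega
    rw [alpha, if_neg h1, if_neg h2]
    apply mul_nonpos_of_nonpos_of_nonneg _ (pois_nonneg hν j)
    have := beta_nonneg hν M
    linarith

lemma alpha_diag (hν : 0 < ν) (M : ℕ) :
    alpha ν M (M+1) = (1/ν) * UU ν (M+1) + (1/((M:ℝ)+1)) * TT ν M := by
  rw [alpha, if_pos (le_refl (M+1)), if_neg (by omega)]
  have hUT1 : TT ν (M+1) = 1 - UU ν (M+1) := by linarith [TT_add_UU hν (M+1)]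
  have hc1 := pois_mul_cc hν (M+1)
  have hc2 := pois_mul_cc' hν M
  calc (cc ν (M+1) * 1 - cc ν M * 0 - (cc ν (M+1) * TT ν (M+1) - cc ν M * TT ν M)) * pois ν (M+1)
      = (pois ν (M+1) * cc ν (M+1)) * (1 - TT ν (M+1))
        + (pois ν (M+1) * cc ν M) * TT ν M := by ring
    _ = (1/ν) * UU ν (M+1) + (1/((M:ℝ)+1)) * TT ν M := by
        rw [hc1, hc2, hUT1]; ring

lemma alpha_diag_nonneg (hν : 0 < ν) (M : ℕ) : 0 ≤ alpha ν M (M+1) := by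
  rw [alpha_diag hν M]
  have h1 : (0:ℝ) ≤ 1/ν := by positivity
  have h2 : (0:ℝ) ≤ 1/((M:ℝ)+1) := by positivity
  nlinarith [UU_nonneg hν (M+1), TT_nonneg hν M]

lemma alpha_diag_le (hν : 0 < ν) (M : ℕ) : alpha ν M (M+1) ≤ 1/ν := by
  rw [alpha_diag hν M, le_div_iff₀ hν]
  have hM : (0:ℝ) < (M:ℝ)+1 := by positivity
  have hI := I1 hν M
  have hTU := TT_add_UU hν (M+1)
  have hp0 := pois_nonneg hν 0
  have key : ν * TT ν M * (1/((M:ℝ)+1)) ≤ TT ν (M+1) - pois ν 0 := by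
    rw [mul_one_div, div_le_iff₀ hM]
    nlinarith [hI]
  have expand : ((1/ν) * UU ν (M+1) + (1/((M:ℝ)+1)) * TT ν M) * ν
      = UU ν (M+1) + ν * TT ν M * (1/((M:ℝ)+1)) := by field_simp
  rw [expand]
  linarith


lemma summable_trunc (hν : 0 < ν) (c : ℝ) (L : ℕ) (A : Set ℕ) :
    Summable (fun j => ind A j * (c * (if j ≤ L then (1:ℝ) else 0) * pois ν j)) := by
  apply summable_of_ne_finset_zero (s := Finset.range (L+1))
  intro j hj
  rw [Finset.mem_range, not_lt] at hj
  have h : ¬ (j ≤ L) := by omega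
  simp [h]

lemma tsum_trunc (hν : 0 < ν) (c : ℝ) (L : ℕ) (A : Set ℕ) :
    ∑' j, ind A j * (c * (if j ≤ L then (1:ℝ) else 0) * pois ν j) = c * SA ν A L := by
  rw [tsum_eq_sum (s := Finset.range (L+1)) (by
    intro j hj
    rw [Finset.mem_range, not_lt] at hj
    have h : ¬ (j ≤ L) := by omega
    simp [h])]
  rw [SA, Finset.mul_sum]
  apply Finset.sum_congr rfl
  intro j hj
  rw [Finset.mem_range] at hj
  rw [if_pos (by omega : j ≤ L)]
  ring

lemma summable_f3 (hν : 0 < ν) (b : ℝ) (A : Set ℕ) :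
    Summable (fun j => ind A j * (b * pois ν j)) := by
  apply ((summable_ind_pois hν A).mul_left b).congr
  intro j; ring

lemma tsum_f3 (hν : 0 < ν) (b : ℝ) (A : Set ℕ) :
    ∑' j, ind A j * (b * pois ν j) = b * PoA ν A := by
  rw [PoA, ← tsum_mul_left]
  apply tsum_congr; intro j; ring

lemma summable_ind_alpha (hν : 0 < ν) (A : Set ℕ) (M : ℕ) :
    Summable (fun j => ind A j * alpha ν M j) := by
  have h1 := summable_trunc hν (cc ν (M+1)) (M+1) A
  have h2 := summable_trunc hν (cc ν M) M A
  have h3 := summable_f3 hν (cc ν (M+1) * TT ν (M+1) - cc ν M * TT ν M) A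
  apply ((h1.sub h2).sub h3).congr
  intro j
  rw [alpha]; ring

lemma stein_repr (hν : 0 < ν) (A : Set ℕ) (M : ℕ) :
    steinG ν A (M+2) - steinG ν A (M+1) = ∑' j, ind A j * alpha ν M j := by
  have h1 := summable_trunc hν (cc ν (M+1)) (M+1) A
  have h2 := summable_trunc hν (cc ν M) M A
  have h3 := summable_f3 hν (cc ν (M+1) * TT ν (M+1) - cc ν M * TT ν M) A
  have e : ∑' j, ind A j * alpha ν M j
      = (∑' j, ind A j * (cc ν (M+1) * (if j ≤ M+1 then (1:ℝ) else 0) * pois ν j))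
        - (∑' j, ind A j * (cc ν M * (if j ≤ M then (1:ℝ) else 0) * pois ν j))
        - (∑' j, ind A j * ((cc ν (M+1) * TT ν (M+1) - cc ν M * TT ν M) * pois ν j)) := by
    rw [← Summable.tsum_sub h1 h2, ← Summable.tsum_sub (h1.sub h2) h3]
    apply tsum_congr
    intro j
    rw [alpha]; ring
  rw [e, tsum_trunc hν _ _ A, tsum_trunc hν _ _ A, tsum_f3 hν _ A]
  show cc ν (M+1) * (SA ν A (M+1) - PoA ν A * TT ν (M+1))
      - cc ν M * (SA ν A M - PoA ν A * TT ν M) = _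
  ring

lemma magic_ub (hν : 0 < ν) (A : Set ℕ) (M : ℕ) :
    steinG ν A (M+2) - steinG ν A (M+1) ≤ 1/ν := by
  rw [stein_repr hν A M]
  have hb : Summable (fun j => if j = M+1 then 1/ν else (0:ℝ)) := by
    apply summable_of_ne_finset_zero (s := {M+1})
    intro j hj
    rw [Finset.mem_singleton] at hj
    simp [hj]
  calc ∑' j, ind A j * alpha ν M j
      ≤ ∑' j, (if j = M+1 then 1/ν else (0:ℝ)) := by
        apply Summable.tsum_le_tsum _ (summable_ind_alpha hν A M) hb
        intro j
        by_cases hj : j = M+1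
        · subst hj
          rw [if_pos rfl]
          calc ind A (M+1) * alpha ν M (M+1) ≤ 1 * alpha ν M (M+1) :=
                mul_le_mul_of_nonneg_right (ind_le_one A _) (alpha_diag_nonneg hν M)
            _ = alpha ν M (M+1) := one_mul _
            _ ≤ 1/ν := alpha_diag_le hν M
        · rw [if_neg hj]
          exact mul_nonpos_of_nonneg_of_nonpos (ind_nonneg A j) (alpha_nonpos hν M j hj)
    _ = 1/ν := tsum_ite_eq (M+1) (fun _ => 1/ν)

lemma SA_compl (A : Set ℕ) (k : ℕ) : SA ν A k + SA ν Aᶜ k = TT ν k := by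
  rw [SA, SA, TT, ← Finset.sum_add_distrib]
  apply Finset.sum_congr rfl
  intro j _
  rw [← add_mul, ind_add_compl, one_mul]

lemma PoA_compl (hν : 0 < ν) (A : Set ℕ) : PoA ν A + PoA ν Aᶜ = 1 := by
  rw [PoA, PoA, ← Summable.tsum_add (summable_ind_pois hν A) (summable_ind_pois hν Aᶜ),
    ← tsum_pois hν]
  apply tsum_congr
  intro j
  rw [← add_mul, ind_add_compl, one_mul]

lemma steinG_compl (hν : 0 < ν) (A : Set ℕ) : ∀ k, steinG ν A k + steinG ν Aᶜ k = 0
  | 0 => by simp [steinG]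
  | (k+1) => by
    show cc ν k * (SA ν A k - PoA ν A * TT ν k)
        + cc ν k * (SA ν Aᶜ k - PoA ν Aᶜ * TT ν k) = 0
    have h1 := SA_compl (ν := ν) A k
    have h2 := PoA_compl hν A
    have e : SA ν Aᶜ k = TT ν k - SA ν A k := by linarith
    have e2 : PoA ν Aᶜ = 1 - PoA ν A := by linarith
    rw [e, e2]; ring

/-- magic factor bound for the Chen–Stein solution -/
lemma magic (hν : 0 < ν) (A : Set ℕ) (M : ℕ) :
    |steinG ν A (M+2) - steinG ν A (M+1)| ≤ 1/ν := by
  rw [abs_le]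
  constructor
  · have h1 := magic_ub hν Aᶜ M
    have h2 := steinG_compl hν A (M+2)
    have h3 := steinG_compl hν A (M+1)
    linarith
  · exact magic_ub hν A M


/-- Stein operator bound for the Bernoulli-sum pmf, by induction. -/
lemma stein_sum_bound (hθ : 0 < θ) (δ : ℝ) (hδ : 0 ≤ δ) :
    ∀ N, ∀ g : ℕ → ℝ, (∀ k, 1 ≤ k → |g (k+1) - g k| ≤ δ) →
    |∑ m ∈ Finset.range (N+1), bq θ N m
        * ((∑ i ∈ Finset.range N, hp θ i) * g (m+2) - m * g (m+1))|
      ≤ δ * ∑ i ∈ Finset.range N, (hp θ i)^2 := by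
  intro N
  induction N with
  | zero =>
    intro g hg
    simp [bq]
  | succ N ih =>
    intro g hg
    set p := hp θ N with hp_def
    have hp0 : 0 ≤ p := (hp_pos hθ N).le
    have hp1 : p ≤ 1 := hp_le_one hθ N
    set lam := ∑ i ∈ Finset.range N, hp θ i with hlam
    have hlam1 : ∑ i ∈ Finset.range (N+1), hp θ i = lam + p := by
      rw [hlam, hp_def, Finset.sum_range_succ]
    -- the exchange identity
    have E0 : ∀ h : ℕ → ℝ, ∑ m ∈ Finset.range (N+2), bq θ (N+1) m * h m
        = (1-p) * ∑ m ∈ Finset.range (N+1), bq θ N m * h m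
          + p * ∑ m ∈ Finset.range (N+1), bq θ N m * h (m+1) := by
      intro h
      have hs : ∑ m ∈ Finset.range (N+2), bq θ (N+1) m * h m
          = (∑ k ∈ Finset.range (N+1), bq θ (N+1) (k+1) * h (k+1))
            + bq θ (N+1) 0 * h 0 := Finset.sum_range_succ' _ _
      have hr : ∀ k, bq θ (N+1) (k+1) * h (k+1)
          = (1-p) * (bq θ N (k+1) * h (k+1)) + p * (bq θ N k * h (k+1)) := by
        intro k
        show (bq θ N (k+1) * (1 - hp θ N) + bq θ N k * hp θ N) * h (k+1) = _
        rw [← hp_def]; ring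
      have h0 : bq θ (N+1) 0 * h 0 = (1-p) * (bq θ N 0 * h 0) := by
        show (bq θ N 0 * (1 - hp θ N)) * h 0 = _
        rw [← hp_def]; ring
      have hbig : ∑ m ∈ Finset.range (N+2), bq θ N m * h m
          = (∑ k ∈ Finset.range (N+1), bq θ N (k+1) * h (k+1))
            + bq θ N 0 * h 0 := Finset.sum_range_succ' _ _
      have hbig2 : ∑ m ∈ Finset.range (N+2), bq θ N m * h m
          = ∑ m ∈ Finset.range (N+1), bq θ N m * h m := by
        rw [Finset.sum_range_succ, bq_support N (N+1) (by omega)]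
        ring
      calc ∑ m ∈ Finset.range (N+2), bq θ (N+1) m * h m
          = (∑ k ∈ Finset.range (N+1), ((1-p) * (bq θ N (k+1) * h (k+1))
              + p * (bq θ N k * h (k+1)))) + (1-p) * (bq θ N 0 * h 0) := by
            rw [hs, h0]
            congr 1
            exact Finset.sum_congr rfl (fun k _ => hr k)
        _ = (1-p) * ((∑ k ∈ Finset.range (N+1), bq θ N (k+1) * h (k+1)) + bq θ N 0 * h 0)
            + p * ∑ k ∈ Finset.range (N+1), bq θ N k * h (k+1) := by
            rw [Finset.sum_add_distrib, ← Finset.mul_sum, ← Finset.mul_sum]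
            ring
        _ = _ := by rw [← hbig, hbig2]
    rw [hlam1]
    rw [E0 (fun m => (lam + p) * g (m+2) - m * g (m+1))]
    have split1 : ∀ m : ℕ, (lam + p) * g (m+2) - (m:ℝ) * g (m+1)
        = (lam * g (m+2) - m * g (m+1)) + p * g (m+2) := by intro m; ring
    have split2 : ∀ m : ℕ, (lam + p) * g (m+1+2) - ((m:ℕ)+1:ℝ) * g (m+1+1)
        = (lam * g (m+3) - m * g (m+2)) + p * g (m+3) - g (m+2) := by
      intro m
      show (lam + p) * g (m+3) - ((m:ℝ)+1) * g (m+2) = _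
      ring
    set T1 := ∑ m ∈ Finset.range (N+1), bq θ N m * (lam * g (m+2) - m * g (m+1)) with hT1
    set T2 := ∑ m ∈ Finset.range (N+1), bq θ N m * (lam * g (m+3) - m * g (m+2)) with hT2
    set G2 := ∑ m ∈ Finset.range (N+1), bq θ N m * g (m+2) with hG2
    set G3 := ∑ m ∈ Finset.range (N+1), bq θ N m * g (m+3) with hG3
    have e1 : ∑ m ∈ Finset.range (N+1), bq θ N m * ((lam + p) * g (m+2) - m * g (m+1))
        = T1 + p * G2 := by
      rw [hT1, hG2, Finset.mul_sum, ← Finset.sum_add_distrib]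
      exact Finset.sum_congr rfl (fun m _ => by rw [split1 m]; ring)
    have e2 : ∑ m ∈ Finset.range (N+1),
          bq θ N m * ((lam + p) * g (m+1+2) - ((m:ℕ)+1:ℝ) * g (m+1+1))
        = T2 + p * G3 - G2 := by
      rw [hT2, hG3, hG2, Finset.mul_sum, ← Finset.sum_add_distrib, ← Finset.sum_sub_distrib]
      exact Finset.sum_congr rfl (fun m _ => by rw [split2 m]; ring)
    have ecast : ∑ m ∈ Finset.range (N+1),
          bq θ N m * ((fun m => (lam + p) * g (m+2) - (m:ℝ) * g (m+1)) (m+1))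
        = ∑ m ∈ Finset.range (N+1),
          bq θ N m * ((lam + p) * g (m+1+2) - ((m:ℕ)+1:ℝ) * g (m+1+1)) := by
      apply Finset.sum_congr rfl
      intro m _
      push_cast
      ring_nf
    have hT1b : |T1| ≤ δ * ∑ i ∈ Finset.range N, (hp θ i)^2 := ih g hg
    have hT2b : |T2| ≤ δ * ∑ i ∈ Finset.range N, (hp θ i)^2 := by
      have := ih (fun k => g (k+1)) (fun k hk => hg (k+1) (by omega))
      simpa using this
    have hG32 : |G3 - G2| ≤ δ := by
      have e3 : G3 - G2 = ∑ m ∈ Finset.range (N+1), bq θ N m * (g (m+3) - g (m+2)) := by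
        rw [hG3, hG2, ← Finset.sum_sub_distrib]
        exact Finset.sum_congr rfl (fun m _ => by ring)
      rw [e3]
      calc |∑ m ∈ Finset.range (N+1), bq θ N m * (g (m+3) - g (m+2))|
          ≤ ∑ m ∈ Finset.range (N+1), |bq θ N m * (g (m+3) - g (m+2))| :=
            Finset.abs_sum_le_sum_abs _ _
        _ ≤ ∑ m ∈ Finset.range (N+1), bq θ N m * δ := by
            apply Finset.sum_le_sum
            intro m _
            rw [abs_mul, abs_of_nonneg (bq_nonneg hθ N m)]
            exact mul_le_mul_of_nonneg_left (hg (m+2) (by omega)) (bq_nonneg hθ N m)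
        _ = δ := by rw [← Finset.sum_mul, bq_sum, one_mul]
    have hfinal : (1-p) * (T1 + p * G2) + p * (T2 + p * G3 - G2)
        = (1-p) * T1 + p * T2 + p^2 * (G3 - G2) := by ring
    rw [e1, ecast, e2, hfinal]
    rw [Finset.sum_range_succ]
    have habs : |(1-p) * T1 + p * T2 + p^2 * (G3 - G2)|
        ≤ (1-p) * |T1| + p * |T2| + p^2 * |G3 - G2| := by
      calc |(1-p) * T1 + p * T2 + p^2 * (G3 - G2)|
          ≤ |(1-p) * T1 + p * T2| + |p^2 * (G3 - G2)| := abs_add_le _ _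
        _ ≤ |(1-p) * T1| + |p * T2| + |p^2 * (G3 - G2)| := by
            linarith [abs_add_le ((1-p) * T1) (p * T2)]
        _ = (1-p) * |T1| + p * |T2| + p^2 * |G3 - G2| := by
            rw [abs_mul, abs_mul, abs_mul, abs_of_nonneg (by linarith : (0:ℝ) ≤ 1-p),
              abs_of_nonneg hp0, abs_of_nonneg (by positivity : (0:ℝ) ≤ p^2)]
    have hσ : (0:ℝ) ≤ ∑ i ∈ Finset.range N, (hp θ i)^2 :=
      Finset.sum_nonneg (fun i _ => by positivity)
    calc |(1-p) * T1 + p * T2 + p^2 * (G3 - G2)|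
        ≤ (1-p) * |T1| + p * |T2| + p^2 * |G3 - G2| := habs
      _ ≤ (1-p) * (δ * ∑ i ∈ Finset.range N, (hp θ i)^2)
          + p * (δ * ∑ i ∈ Finset.range N, (hp θ i)^2) + p^2 * δ := by
          have b1 := mul_le_mul_of_nonneg_left hT1b (by linarith : (0:ℝ) ≤ 1-p)
          have b2 := mul_le_mul_of_nonneg_left hT2b hp0
          have b3 := mul_le_mul_of_nonneg_left hG32 (by positivity : (0:ℝ) ≤ p^2)
          linarith
      _ = δ * (∑ i ∈ Finset.range N, (hp θ i)^2 + p^2) := by ring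
      _ = δ * (∑ i ∈ Finset.range N, (hp θ i)^2 + hp θ N ^ 2) := by rw [hp_def]

/-- The full Chen–Stein estimate for the shifted Bernoulli sum. -/
lemma key_bound (hθ : 0 < θ) (N : ℕ) (A : Set ℕ) :
    |∑ m ∈ Finset.range (N+1), bq θ N m
        * (ind A (m+1) - PoA (1 + ∑ i ∈ Finset.range N, hp θ i) A)|
      ≤ (1 + 1/θ) / (1 + ∑ i ∈ Finset.range N, hp θ i) := by
  set lam := ∑ i ∈ Finset.range N, hp θ i with hlam
  have hlam0 : 0 ≤ lam := Finset.sum_nonneg (fun i _ => (hp_pos hθ i).le)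
  set ν := 1 + lam with hν_def
  have hν : 0 < ν := by rw [hν_def]; linarith
  set g := steinG ν A with hg_def
  have hgb : ∀ k, 1 ≤ k → |g (k+1) - g k| ≤ 1/ν := by
    intro k hk
    obtain ⟨M, rfl⟩ : ∃ M, k = M + 1 := ⟨k - 1, by omega⟩
    exact magic hν A M
  have hterm : ∀ m : ℕ, ind A (m+1) - PoA ν A
      = (lam * g (m+2) - m * g (m+1)) + (g (m+2) - g (m+1)) := by
    intro m
    have h := stein_eq hν A (m+1)
    have hc : (((m+1 : ℕ)):ℝ) = (m:ℝ) + 1 := by push_cast; ring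
    rw [hc] at h
    rw [← h, hν_def]
    show ν * g (m+2) - ((m:ℝ)+1) * g (m+1) = _
    rw [hν_def]
    ring
  have hsplit : ∑ m ∈ Finset.range (N+1), bq θ N m * (ind A (m+1) - PoA ν A)
      = (∑ m ∈ Finset.range (N+1), bq θ N m * (lam * g (m+2) - m * g (m+1)))
        + ∑ m ∈ Finset.range (N+1), bq θ N m * (g (m+2) - g (m+1)) := by
    rw [← Finset.sum_add_distrib]
    exact Finset.sum_congr rfl (fun m _ => by rw [hterm m]; ring)
  have hδ : (0:ℝ) ≤ 1/ν := by positivity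
  have hb1 := stein_sum_bound hθ (1/ν) hδ N g hgb
  have hb2 : |∑ m ∈ Finset.range (N+1), bq θ N m * (g (m+2) - g (m+1))| ≤ 1/ν := by
    calc |∑ m ∈ Finset.range (N+1), bq θ N m * (g (m+2) - g (m+1))|
        ≤ ∑ m ∈ Finset.range (N+1), |bq θ N m * (g (m+2) - g (m+1))| :=
          Finset.abs_sum_le_sum_abs _ _
      _ ≤ ∑ m ∈ Finset.range (N+1), bq θ N m * (1/ν) := by
          apply Finset.sum_le_sum
          intro m _
          rw [abs_mul, abs_of_nonneg (bq_nonneg hθ N m)]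
          exact mul_le_mul_of_nonneg_left (hgb (m+1) (by omega)) (bq_nonneg hθ N m)
      _ = 1/ν := by rw [← Finset.sum_mul, bq_sum, one_mul]
  have hσ := hp_sq_sum hθ N
  have hσ0 : (0:ℝ) ≤ ∑ i ∈ Finset.range N, (hp θ i)^2 :=
    Finset.sum_nonneg (fun i _ => by positivity)
  rw [hsplit]
  calc |(∑ m ∈ Finset.range (N+1), bq θ N m * (lam * g (m+2) - m * g (m+1)))
        + ∑ m ∈ Finset.range (N+1), bq θ N m * (g (m+2) - g (m+1))|
      ≤ (1/ν) * ∑ i ∈ Finset.range N, (hp θ i)^2 + 1/ν := by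
        have := abs_add_le (∑ m ∈ Finset.range (N+1), bq θ N m * (lam * g (m+2) - m * g (m+1)))
          (∑ m ∈ Finset.range (N+1), bq θ N m * (g (m+2) - g (m+1)))
        linarith
    _ ≤ (1/ν) * (1/θ) + 1/ν := by
        have := mul_le_mul_of_nonneg_left hσ hδ
        linarith
    _ = (1 + 1/θ) / ν := by field_simp; ring


section Prob

variable {Ω : Type*} [MeasurableSpace Ω] {θ : ℝ} {μ : Measure Ω} {U : ℕ → Ω → ℕ}

/-- deterministic depth function of a parent vector -/
def dv (u : ℕ → ℕ) (n : ℕ) : ℕ := hoppeDepth (fun k (_ : Unit) => u k) () n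

lemma depth_succ (U : ℕ → Ω → ℕ) (ω : Ω) (n : ℕ) :
    hoppeDepth U ω (n+2) = hoppeDepth U ω (min (U n ω) (n+1)) + 1 := by
  rw [hoppeDepth]

lemma depth_zero (U : ℕ → Ω → ℕ) (ω : Ω) : hoppeDepth U ω 0 = 0 := by rw [hoppeDepth]

lemma depth_one (U : ℕ → Ω → ℕ) (ω : Ω) : hoppeDepth U ω 1 = 0 := by rw [hoppeDepth]

lemma dv_zero (u : ℕ → ℕ) : dv u 0 = 0 := by rw [dv, hoppeDepth]

lemma dv_one (u : ℕ → ℕ) : dv u 1 = 0 := by rw [dv, hoppeDepth]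

lemma dv_succ (u : ℕ → ℕ) (n : ℕ) : dv u (n+2) = dv u (min (u n) (n+1)) + 1 := by
  rw [dv, dv, hoppeDepth]

lemma depth_eq_dv (U : ℕ → Ω → ℕ) (ω : Ω) : ∀ n, hoppeDepth U ω n = dv (fun k => U k ω) n := by
  intro n
  induction n using Nat.strong_induction_on with
  | _ n ih =>
    match n with
    | 0 => rw [depth_zero, dv_zero]
    | 1 => rw [depth_one, dv_one]
    | (m+2) =>
      rw [depth_succ, dv_succ]
      congr 1
      exact ih _ (by have := min_le_right (U m ω) (m+1); omega)

lemma dv_congr : ∀ (n : ℕ) (u u' : ℕ → ℕ), (∀ k, k + 2 ≤ n → u k = u' k) → dv u n = dv u' n := by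
  intro n
  induction n using Nat.strong_induction_on with
  | _ n ih =>
    match n with
    | 0 => intro u u' _; rw [dv_zero, dv_zero]
    | 1 => intro u u' _; rw [dv_one, dv_one]
    | (m+2) =>
      intro u u' h
      have hm : u m = u' m := h m (le_refl _)
      rw [dv_succ, dv_succ, hm]
      congr 1
      apply ih _ (by have := min_le_right (u' m) (m+1); omega)
      intro k hk
      have := min_le_right (u' m) (m+1)
      exact h k (by omega)

lemma depth_le (U : ℕ → Ω → ℕ) (ω : Ω) : ∀ n, hoppeDepth U ω n ≤ n := by
  intro n
  induction n using Nat.strong_induction_on with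
  | _ n ih =>
    match n with
    | 0 => rw [depth_zero]
    | 1 => rw [depth_one]; omega
    | (m+2) =>
      rw [depth_succ]
      have h1 := min_le_right (U m ω) (m+1)
      have h2 := ih (min (U m ω) (m+1)) (by omega)
      omega

lemma measurable_depth (hU : ∀ k, Measurable (U k)) : ∀ n, Measurable (fun ω => hoppeDepth U ω n) := by
  intro n
  induction n using Nat.strong_induction_on with
  | _ n ih =>
    match n with
    | 0 => simp only [depth_zero]; exact measurable_const
    | 1 => simp only [depth_one]; exact measurable_const
    | (m+2) =>
      apply measurable_to_countable'
      intro s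
      have hset : (fun ω => hoppeDepth U ω (m+2)) ⁻¹' {s}
          = ⋃ j ∈ Finset.range (m+2),
              (((fun ω => min (U m ω) (m+1)) ⁻¹' {j}) ∩
                ((fun ω => hoppeDepth U ω j + 1) ⁻¹' {s})) := by
        ext ω
        simp only [Set.mem_preimage, Set.mem_singleton_iff, Set.mem_iUnion, Set.mem_inter_iff,
          Finset.mem_range]
        constructor
        · intro hs
          refine ⟨min (U m ω) (m+1), ?_, rfl, ?_⟩
          · have := min_le_right (U m ω) (m+1); omega
          · rw [← depth_succ]; exact hs
        · rintro ⟨j, _, hj, hs⟩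
          rw [depth_succ, hj]
          exact hs
      rw [hset]
      apply MeasurableSet.biUnion (Finset.range (m+2)).countable_toSet
      intro j hj
      rw [Finset.mem_coe, Finset.mem_range] at hj
      exact ((( hU m).min measurable_const) (MeasurableSet.singleton j)).inter
        (((ih j (by omega)).add measurable_const) (MeasurableSet.singleton s))

lemma indep_U_depth (hU : IsHoppeParents θ μ U) (j n : ℕ) (hj : j ≤ n+1) :
    IndepFun (U n) (fun ω => hoppeDepth U ω j) μ := by
  have hdisj : Disjoint ({n} : Finset ℕ) (Finset.range n) := by
    simp [Finset.disjoint_left]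
  have base := hU.indep.indepFun_finset {n} (Finset.range n) hdisj hU.meas
  have hn : n ∈ ({n} : Finset ℕ) := Finset.mem_singleton_self n
  set φ : (({n} : Finset ℕ) → ℕ) → ℕ := fun v => v ⟨n, hn⟩ with hφ
  set ψ : (↥(Finset.range n) → ℕ) → ℕ :=
    fun v => dv (fun k => if h : k ∈ Finset.range n then v ⟨k, h⟩ else 0) j with hψ
  have hφm : Measurable φ := measurable_of_countable _
  have hψm : Measurable ψ := measurable_of_countable _
  have hcomp := base.comp hφm hψm
  have e1 : φ ∘ (fun ω (i : ({n} : Finset ℕ)) => U i ω) = U n := rfl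
  have e2 : ψ ∘ (fun ω (i : ↥(Finset.range n)) => U i ω)
      = fun ω => hoppeDepth U ω j := by
    funext ω
    show dv (fun k => if h : k ∈ Finset.range n then U k ω else 0) j = hoppeDepth U ω j
    rw [depth_eq_dv U ω j]
    apply dv_congr
    intro k hk
    rw [dif_pos (by rw [Finset.mem_range]; omega)]
  rw [e1, e2] at hcomp
  exact hcomp


variable [IsProbabilityMeasure μ]

lemma law_zero (hU : IsHoppeParents θ μ U) (n : ℕ) :
    μ {ω | hoppeDepth U ω (n+2) = 0} = 0 := by
  have h : {ω | hoppeDepth U ω (n+2) = 0} = ∅ := by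
    ext ω
    simp [depth_succ]
  rw [h, measure_empty]

lemma law_rec (hU : IsHoppeParents θ μ U) (n m : ℕ) :
    μ {ω | hoppeDepth U ω (n+2) = m+1}
      = ∑ j ∈ Finset.Icc 1 (n+1), μ {ω | U n ω = j} * μ {ω | hoppeDepth U ω j = m} := by
  set R := {ω | 1 ≤ U n ω ∧ U n ω ≤ n+1} with hRdef
  have hRm : MeasurableSet R := by
    have : R = (U n)⁻¹' {x | 1 ≤ x ∧ x ≤ n+1} := rfl
    rw [this]
    exact (hU.meas n) (MeasurableSet.of_discrete)
  have hR : μ R = 1 := hU.range n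
  have hRc : μ Rᶜ = 0 := by
    have h := measure_compl hRm (measure_ne_top μ R)
    rw [hR, measure_univ] at h
    simpa using h
  set S := {ω | hoppeDepth U ω (n+2) = m+1} with hSdef
  have hSm : MeasurableSet S :=
    (measurable_depth hU.meas (n+2)) (MeasurableSet.singleton (m+1))
  have step1 : μ S = μ (S ∩ R) := by
    have h1 := measure_inter_add_diff S hRm (μ := μ)
    have h2 : μ (S \ R) = 0 := by
      apply le_antisymm _ zero_le
      calc μ (S \ R) ≤ μ Rᶜ := measure_mono (fun ω hω => hω.2)
        _ = 0 := hRc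
    rw [← h1, h2, add_zero]
  have step2 : S ∩ R = ⋃ j ∈ (Finset.Icc 1 (n+1) : Finset ℕ),
      ({ω | U n ω = j} ∩ {ω | hoppeDepth U ω j = m}) := by
    ext ω
    simp only [Set.mem_inter_iff, Set.mem_setOf_eq, Set.mem_iUnion, Finset.mem_Icc,
      hSdef, hRdef]
    constructor
    · rintro ⟨hs, h1, h2⟩
      refine ⟨U n ω, ⟨h1, h2⟩, rfl, ?_⟩
      rw [depth_succ, min_eq_left h2] at hs
      omega
    · rintro ⟨j, ⟨hj1, hj2⟩, hj, hd⟩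
      subst hj
      refine ⟨?_, hj1, hj2⟩
      rw [depth_succ, min_eq_left hj2, hd]
  have step3 : μ (⋃ j ∈ (Finset.Icc 1 (n+1) : Finset ℕ),
      ({ω | U n ω = j} ∩ {ω | hoppeDepth U ω j = m}))
      = ∑ j ∈ Finset.Icc 1 (n+1), μ ({ω | U n ω = j} ∩ {ω | hoppeDepth U ω j = m}) := by
    apply measure_biUnion_finset
    · intro i hi j hj hij
      rw [Function.onFun]
      apply Set.disjoint_left.mpr
      rintro ω ⟨h1, _⟩ ⟨h2, _⟩
      exact hij (h1 ▸ h2 ▸ rfl)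
    · intro j _
      exact ((hU.meas n) (MeasurableSet.singleton j)).inter
        ((measurable_depth hU.meas j) (MeasurableSet.singleton m))
  have step4 : ∀ j ∈ Finset.Icc 1 (n+1),
      μ ({ω | U n ω = j} ∩ {ω | hoppeDepth U ω j = m})
        = μ {ω | U n ω = j} * μ {ω | hoppeDepth U ω j = m} := by
    intro j hj
    rw [Finset.mem_Icc] at hj
    have hind := indep_U_depth hU j n hj.2
    have := (indepFun_iff_measure_inter_preimage_eq_mul.mp hind) {j} {m}
      (MeasurableSet.singleton j) (MeasurableSet.singleton m)
    exact this
  rw [step1, step2, step3]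
  exact Finset.sum_congr rfl step4

lemma law_eq (hθ : 0 < θ) (hU : IsHoppeParents θ μ U) :
    ∀ n m, μ {ω | hoppeDepth U ω (n+2) = m}
      = if m = 0 then 0 else ENNReal.ofReal (bq θ n (m-1)) := by
  intro n
  induction n using Nat.strong_induction_on with
  | _ n ih =>
    intro m
    cases m with
    | zero => rw [law_zero hU n]; rfl
    | succ m =>
      rw [if_neg (by omega)]
      rw [law_rec hU n m]
      have hθn : (0:ℝ) < θ + n := by positivity
      have hsplit : Finset.Icc 1 (n+1) = insert 1 (Finset.Icc 2 (n+1)) := by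
        ext x
        simp only [Finset.mem_Icc, Finset.mem_insert]
        omega
      have h1notin : (1:ℕ) ∉ Finset.Icc 2 (n+1) := by simp [Finset.mem_Icc]
      rw [hsplit, Finset.sum_insert h1notin]
      have hD1 : μ {ω | hoppeDepth U ω 1 = m} = if m = 0 then 1 else 0 := by
        by_cases hm : m = 0
        · subst hm
          have h : {ω | hoppeDepth U ω 1 = 0} = Set.univ := by
            ext ω; simp [depth_one]
          rw [h, measure_univ, if_pos rfl]
        · have h : {ω | hoppeDepth U ω 1 = m} = ∅ := by
            ext ω
            simp only [Set.mem_setOf_eq, Set.mem_empty_iff_false, iff_false, depth_one]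
            omega
          rw [h, measure_empty, if_neg hm]
      have hsum2 : ∑ j ∈ Finset.Icc 2 (n+1), μ {ω | U n ω = j} * μ {ω | hoppeDepth U ω j = m}
          = ∑ i ∈ Finset.range n, ENNReal.ofReal (1/(θ+n))
              * (if m = 0 then 0 else ENNReal.ofReal (bq θ i (m-1))) := by
        have hicc : Finset.Icc 2 (n+1) = Finset.Ico 2 (n+2) := by
          exact (Finset.Ico_add_one_right_eq_Icc _ _).symm
        rw [hicc, Finset.sum_Ico_eq_sum_range]
        simp only [Nat.add_sub_cancel]
        apply Finset.sum_congr rfl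
        intro i hi
        rw [Finset.mem_range] at hi
        rw [hU.nonroot n (2+i) (by omega) (by omega)]
        congr 1
        have h2i : 2 + i = i + 2 := by omega
        rw [h2i]
        exact ih i hi m
      rw [hsum2, hU.root n, hD1]
      by_cases hm : m = 0
      · subst hm
        simp only [if_true, eq_self_iff_true, mul_one, mul_zero, Finset.sum_const_zero,
          add_zero, if_pos]
        congr 1
        have hb := bqB0 (θ := θ) hθ n
        have : bq θ n 0 = θ / (θ + n) := by
          field_simp
          linarith [hb]
        rw [this]
      · obtain ⟨m'', rfl⟩ : ∃ m'', m = m'' + 1 := ⟨m - 1, by omega⟩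
        simp only [if_neg hm, mul_zero, zero_add, Nat.add_sub_cancel]
        have hterm : ∀ i ∈ Finset.range n, ENNReal.ofReal (1/(θ+n))
            * ENNReal.ofReal (bq θ i m'')
            = ENNReal.ofReal ((1/(θ+n)) * bq θ i m'') := by
          intro i _
          rw [← ENNReal.ofReal_mul (by positivity)]
        rw [Finset.sum_congr rfl hterm]
        rw [← ENNReal.ofReal_sum_of_nonneg (fun i _ =>
          mul_nonneg (by positivity) (bq_nonneg hθ i m''))]
        congr 1
        have hbs := bqBS (θ := θ) hθ n m''
        rw [← Finset.mul_sum, ← hbs]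
        show (1/(θ+n)) * ((θ+n) * bq θ n (m''+1)) = bq θ n (m''+1)
        field_simp


lemma law_succ (hθ : 0 < θ) (hU : IsHoppeParents θ μ U) (N m : ℕ) :
    μ {ω | hoppeDepth U ω (N+2) = m+1} = ENNReal.ofReal (bq θ N m) := by
  rw [law_eq hθ hU N (m+1)]
  simp

lemma map_apply_eq (hθ : 0 < θ) (hU : IsHoppeParents θ μ U) (N : ℕ) (A : Set ℕ) :
    Measure.map (fun ω => hoppeDepth U ω (N+2)) μ A
      = ∑ m ∈ Finset.range (N+1), (if (m+1) ∈ A then ENNReal.ofReal (bq θ N m) else 0) := by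
  have hDm : Measurable (fun ω => hoppeDepth U ω (N+2)) := measurable_depth hU.meas (N+2)
  rw [Measure.map_apply hDm MeasurableSet.of_discrete]
  set D := fun ω => hoppeDepth U ω (N+2) with hDdef
  have hpre : ∀ s : ℕ, D ⁻¹' {s} = {ω | D ω = s} := fun s => rfl
  have hdisj : ∀ (F : Finset ℕ), (↑F : Set ℕ).PairwiseDisjoint (fun s => D ⁻¹' {s}) := by
    intro F i _ j _ hij
    rw [Function.onFun]
    apply Set.disjoint_left.mpr
    rintro ω h1 h2
    rw [Set.mem_preimage, Set.mem_singleton_iff] at h1 h2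
    exact hij (h1 ▸ h2 ▸ rfl)
  have hmeasre : ∀ s : ℕ, MeasurableSet (D ⁻¹' {s}) := fun s => hDm (MeasurableSet.singleton s)
  have hIccsum : ∀ (P : ℕ → ENNReal), ∑ s ∈ Finset.Icc 1 (N+1), P s
      = ∑ m ∈ Finset.range (N+1), P (m+1) := by
    intro P
    have hicc : Finset.Icc 1 (N+1) = Finset.Ico 1 (N+2) := by exact (Finset.Ico_add_one_right_eq_Icc _ _).symm
    rw [hicc, Finset.sum_Ico_eq_sum_range]
    exact Finset.sum_congr rfl (fun m _ => by rw [Nat.add_comm 1 m])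
  have hIcc : μ (D ⁻¹' (Set.Icc 1 (N+1))) = 1 := by
    have hun : D ⁻¹' (Set.Icc 1 (N+1)) = ⋃ s ∈ Finset.Icc 1 (N+1), D ⁻¹' {s} := by
      ext ω
      simp only [Set.mem_preimage, Set.mem_Icc, Set.mem_iUnion, Finset.mem_Icc,
        Set.mem_singleton_iff]
      exact ⟨fun h => ⟨D ω, h, rfl⟩, fun ⟨s, hs, h⟩ => h ▸ hs⟩
    rw [hun, measure_biUnion_finset (hdisj _) (fun s _ => hmeasre s), hIccsum]
    have : ∀ m ∈ Finset.range (N+1), μ (D ⁻¹' {m+1}) = ENNReal.ofReal (bq θ N m) := by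
      intro m _
      rw [hpre]
      exact law_succ hθ hU N m
    rw [Finset.sum_congr rfl this,
      ← ENNReal.ofReal_sum_of_nonneg (fun m _ => bq_nonneg hθ N m), bq_sum (θ := θ) N]
    simp
  have hms : MeasurableSet (D ⁻¹' (Set.Icc 1 (N+1))) :=
    hDm (MeasurableSet.of_discrete (s := Set.Icc 1 (N+1)))
  have hcompl : μ ((D ⁻¹' (Set.Icc 1 (N+1)))ᶜ) = 0 := by
    have h := measure_compl hms (measure_ne_top μ _)
    rw [hIcc, measure_univ] at h
    simpa using h
  have hstep : μ (D ⁻¹' A) = μ (D ⁻¹' A ∩ D ⁻¹' (Set.Icc 1 (N+1))) := by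
    have h1 := measure_inter_add_diff (D ⁻¹' A) hms (μ := μ)
    have h2 : μ (D ⁻¹' A \ D ⁻¹' (Set.Icc 1 (N+1))) = 0 := by
      apply le_antisymm _ zero_le
      calc μ (D ⁻¹' A \ D ⁻¹' (Set.Icc 1 (N+1))) ≤ μ ((D ⁻¹' (Set.Icc 1 (N+1)))ᶜ) :=
            measure_mono (fun ω hω => hω.2)
        _ = 0 := hcompl
    rw [← h1, h2, add_zero]
  have hun2 : D ⁻¹' A ∩ D ⁻¹' (Set.Icc 1 (N+1))
      = ⋃ s ∈ (Finset.Icc 1 (N+1)).filter (· ∈ A), D ⁻¹' {s} := by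
    ext ω
    simp only [Set.mem_inter_iff, Set.mem_preimage, Set.mem_Icc, Set.mem_iUnion,
      Finset.mem_filter, Finset.mem_Icc, Set.mem_singleton_iff]
    constructor
    · rintro ⟨hA, h1, h2⟩
      exact ⟨D ω, ⟨⟨h1, h2⟩, hA⟩, rfl⟩
    · rintro ⟨s, ⟨⟨h1, h2⟩, hA⟩, h⟩
      exact ⟨h ▸ hA, h ▸ h1, h ▸ h2⟩
  rw [hstep, hun2, measure_biUnion_finset
    ((hdisj _).subset (Finset.coe_subset.mpr (Finset.filter_subset _ _)))
    (fun s _ => hmeasre s), Finset.sum_filter, hIccsum]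
  apply Finset.sum_congr rfl
  intro m _
  by_cases hA : (m+1) ∈ A
  · rw [if_pos hA, if_pos hA, hpre]
    exact law_succ hθ hU N m
  · rw [if_neg hA, if_neg hA]

lemma exp_eq (hθ : 0 < θ) (hU : IsHoppeParents θ μ U) (N : ℕ) :
    ∫ ω, (hoppeDepth U ω (N+2) : ℝ) ∂μ = 1 + ∑ i ∈ Finset.range N, hp θ i := by
  set D := fun ω => hoppeDepth U ω (N+2) with hDdef
  have hDm : Measurable D := measurable_depth hU.meas (N+2)
  have hSm : ∀ s : ℕ, MeasurableSet {ω | D ω = s} :=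
    fun s => hDm (MeasurableSet.singleton s)
  have hpt : ∀ ω, ((D ω : ℕ) : ℝ)
      = ∑ s ∈ Finset.range (N+3),
          (s:ℝ) * Set.indicator {ω' | D ω' = s} (fun _ => (1:ℝ)) ω := by
    intro ω
    rw [Finset.sum_eq_single (D ω)]
    · rw [Set.indicator_of_mem (by exact rfl : ω ∈ {ω' | D ω' = D ω})]
      ring
    · intro s _ hs
      rw [Set.indicator_of_notMem (by
        simp only [Set.mem_setOf_eq]
        exact fun h => hs (h ▸ rfl))]
      ring
    · intro habs
      exfalso
      apply habs
      rw [Finset.mem_range]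
      have h1 := depth_le U ω (N+2)
      have h2 : D ω = hoppeDepth U ω (N+2) := rfl
      omega
  have hint : ∀ s : ℕ, Integrable
      (fun ω => (s:ℝ) * Set.indicator {ω' | D ω' = s} (fun _ => (1:ℝ)) ω) μ := by
    intro s
    exact ((integrable_const (1:ℝ)).indicator (hSm s)).const_mul (s:ℝ)
  have hval : ∀ s : ℕ, ∫ ω, (s:ℝ) * Set.indicator {ω' | D ω' = s} (fun _ => (1:ℝ)) ω ∂μ
      = (s:ℝ) * (μ {ω | D ω = s}).toReal := by
    intro s
    rw [integral_const_mul]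
    congr 1
    rw [integral_indicator_const (1:ℝ) (hSm s)]
    rw [smul_eq_mul, mul_one]
    rfl
  calc ∫ ω, (D ω : ℝ) ∂μ
      = ∫ ω, ∑ s ∈ Finset.range (N+3),
          (s:ℝ) * Set.indicator {ω' | D ω' = s} (fun _ => (1:ℝ)) ω ∂μ := by
        apply integral_congr_ae
        exact Filter.Eventually.of_forall hpt
    _ = ∑ s ∈ Finset.range (N+3),
          ∫ ω, (s:ℝ) * Set.indicator {ω' | D ω' = s} (fun _ => (1:ℝ)) ω ∂μ :=
        integral_finset_sum _ (fun s _ => hint s)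
    _ = ∑ s ∈ Finset.range (N+3), (s:ℝ) * (μ {ω | D ω = s}).toReal :=
        Finset.sum_congr rfl (fun s _ => hval s)
    _ = ∑ m ∈ Finset.range (N+2), ((m:ℝ)+1) * (μ {ω | D ω = m+1}).toReal := by
        rw [Finset.sum_range_succ' (fun s => (s:ℝ) * (μ {ω | D ω = s}).toReal) (N+2)]
        have h0 : ((0:ℕ):ℝ) * (μ {ω | D ω = 0}).toReal = 0 := by norm_num
        rw [h0, add_zero]
        apply Finset.sum_congr rfl
        intro m _
        push_cast
        ring
    _ = ∑ m ∈ Finset.range (N+2), ((m:ℝ)+1) * bq θ N m := by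
        apply Finset.sum_congr rfl
        intro m _
        rw [hDdef]
        rw [law_succ hθ hU N m, ENNReal.toReal_ofReal (bq_nonneg hθ N m)]
    _ = ∑ m ∈ Finset.range (N+1), ((m:ℝ)+1) * bq θ N m := by
        rw [Finset.sum_range_succ, bq_support N (N+1) (by omega)]
        ring
    _ = 1 + ∑ i ∈ Finset.range N, hp θ i := by
        have h1 : ∑ m ∈ Finset.range (N+1), ((m:ℝ)+1) * bq θ N m
            = (∑ m ∈ Finset.range (N+1), (m:ℝ) * bq θ N m)
              + ∑ m ∈ Finset.range (N+1), bq θ N m := by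
          rw [← Finset.sum_add_distrib]
          exact Finset.sum_congr rfl (fun m _ => by ring)
        rw [h1, bq_mean, bq_sum]
        ring

lemma map_toReal (hθ : 0 < θ) (hU : IsHoppeParents θ μ U) (N : ℕ) (A : Set ℕ) :
    ((Measure.map (fun ω => hoppeDepth U ω (N+2)) μ) A).toReal
      = ∑ m ∈ Finset.range (N+1), ind A (m+1) * bq θ N m := by
  rw [map_apply_eq hθ hU N A]
  have hterm : ∀ m ∈ Finset.range (N+1),
      (if (m+1) ∈ A then ENNReal.ofReal (bq θ N m) else 0)
        = ENNReal.ofReal (ind A (m+1) * bq θ N m) := by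
    intro m _
    rw [ind]
    by_cases hA : (m+1) ∈ A
    · rw [if_pos hA, if_pos hA, one_mul]
    · rw [if_neg hA, if_neg hA, zero_mul, ENNReal.ofReal_zero]
  rw [Finset.sum_congr rfl hterm,
    ← ENNReal.ofReal_sum_of_nonneg
      (fun m _ => mul_nonneg (ind_nonneg A (m+1)) (bq_nonneg hθ N m)),
    ENNReal.toReal_ofReal
      (Finset.sum_nonneg (fun m _ => mul_nonneg (ind_nonneg A (m+1)) (bq_nonneg hθ N m)))]

end Prob

lemma poisson_toReal (r : ℝ) (hr : 0 < r) (A : Set ℕ) :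
    ((poissonMeasure r.toNNReal) A).toReal = PoA r A := by
  rw [poissonMeasure, Measure.sum_apply _ MeasurableSet.of_discrete]
  have hc : ((r.toNNReal : NNReal) : ℝ) = r := Real.coe_toNNReal r hr.le
  have hterm : ∀ x, (ENNReal.ofReal (Real.exp (-((r.toNNReal : NNReal) : ℝ))
        * ((r.toNNReal : NNReal) : ℝ) ^ x / (Nat.factorial x)) • Measure.dirac x) A
      = ENNReal.ofReal (ind A x * pois r x) := by
    intro x
    rw [Measure.smul_apply, Measure.dirac_apply' _ MeasurableSet.of_discrete, smul_eq_mul, ind, hc]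
    by_cases hx : x ∈ A
    · rw [Set.indicator_of_mem hx, if_pos hx, one_mul, Pi.one_apply, mul_one] <;> rfl
    · rw [Set.indicator_of_notMem hx, if_neg hx, zero_mul, mul_zero, ENNReal.ofReal_zero]
  rw [tsum_congr hterm,
    ← ENNReal.ofReal_tsum_of_nonneg (fun x => mul_nonneg (ind_nonneg A x) (pois_nonneg hr x))
      (summable_ind_pois hr A)]
  exact ENNReal.toReal_ofReal (PoA_nonneg hr A)

end HoppeAux

/-- Poisson approximation of the depth of the `n`-th node of a Hoppe tree:
the total variation distance between the law of the depth and the Poisson distribution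
with parameter `E[D_n]` is `O(1 / log n)`. -/
theorem hoppe_depth_poisson_approximation
    {Ω : Type*} [MeasurableSpace Ω]
    (θ : ℝ) (hθ : 0 < θ)
    (μ : Measure Ω) [IsProbabilityMeasure μ] (U : ℕ → Ω → ℕ) (hU : IsHoppeParents θ μ U) :
    ∃ C : ℝ, 0 < C ∧ ∃ n₀ : ℕ, ∀ n : ℕ, n₀ ≤ n →
      tvDist (Measure.map (fun ω => hoppeDepth U ω n) μ)
          (poissonMeasure (Real.toNNReal (∫ ω, (hoppeDepth U ω n : ℝ) ∂μ)))
        ≤ C / Real.log n := by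
  refine ⟨(1 + 1/θ) * (2*(θ+1)), by positivity, 3, ?_⟩
  intro n hn
  obtain ⟨N, rfl⟩ : ∃ N, n = N + 2 := ⟨n - 2, by omega⟩
  have hN1 : 1 ≤ N := by omega
  have hexp := HoppeAux.exp_eq hθ hU N
  set lam := ∑ i ∈ Finset.range N, HoppeAux.hp θ i with hlam
  have hlam0 : 0 ≤ lam :=
    Finset.sum_nonneg (fun i _ => (HoppeAux.hp_pos hθ i).le)
  have hν : 0 < 1 + lam := by linarith
  rw [hexp]
  have hbound : ∀ A : Set ℕ,
      |((Measure.map (fun ω => hoppeDepth U ω (N+2)) μ) A).toReal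
        - ((poissonMeasure (Real.toNNReal (1+lam))) A).toReal| ≤ (1 + 1/θ) / (1 + lam) := by
    intro A
    rw [HoppeAux.map_toReal hθ hU N A, HoppeAux.poisson_toReal (1+lam) hν A]
    have hrw : (∑ m ∈ Finset.range (N+1), HoppeAux.ind A (m+1) * HoppeAux.bq θ N m)
        - HoppeAux.PoA (1+lam) A
        = ∑ m ∈ Finset.range (N+1), HoppeAux.bq θ N m
            * (HoppeAux.ind A (m+1) - HoppeAux.PoA (1+lam) A) := by
      have hpt : ∀ m ∈ Finset.range (N+1),
          HoppeAux.bq θ N m * (HoppeAux.ind A (m+1) - HoppeAux.PoA (1+lam) A)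
          = HoppeAux.ind A (m+1) * HoppeAux.bq θ N m
            - HoppeAux.bq θ N m * HoppeAux.PoA (1+lam) A := fun m _ => by ring
      rw [Finset.sum_congr rfl hpt, Finset.sum_sub_distrib, ← Finset.sum_mul,
        HoppeAux.bq_sum (θ := θ) N, one_mul]
    rw [hrw]
    exact HoppeAux.key_bound hθ N A
  have htv : tvDist (Measure.map (fun ω => hoppeDepth U ω (N+2)) μ)
      (poissonMeasure (Real.toNNReal (1+lam))) ≤ (1 + 1/θ) / (1 + lam) := by
    show (⨆ A : Set ℕ, |((Measure.map (fun ω => hoppeDepth U ω (N+2)) μ) A).toReal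
      - ((poissonMeasure (Real.toNNReal (1+lam))) A).toReal|) ≤ (1 + 1/θ) / (1 + lam)
    exact ciSup_le hbound
  have hcast : (((N+2:ℕ)):ℝ) = (N:ℝ)+2 := by push_cast; ring
  have hNr : (1:ℝ) ≤ (N:ℝ) := by exact_mod_cast hN1
  have hlog_pos : 0 < Real.log ((N:ℝ)+2) := by
    apply Real.log_pos
    linarith
  have hharm := HoppeAux.log_le_harmonic N
  have hlam_ge : Real.log ((N:ℝ)+1) ≤ (θ+1) * lam := by
    have hterm : ∀ i ∈ Finset.range N, (1:ℝ)/((i:ℝ)+1) ≤ (θ+1) * HoppeAux.hp θ i := by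
      intro i _
      rw [HoppeAux.hp]
      have h1 : (0:ℝ) < (i:ℝ)+1 := by positivity
      have h2 : (0:ℝ) < θ+(i:ℝ)+1 := by positivity
      rw [mul_one_div, div_le_div_iff₀ h1 h2]
      have h3 : (0:ℝ) ≤ θ * (i:ℝ) := mul_nonneg hθ.le (Nat.cast_nonneg i)
      nlinarith
    calc Real.log ((N:ℝ)+1) ≤ ∑ i ∈ Finset.range N, (1:ℝ)/((i:ℝ)+1) := hharm
      _ ≤ ∑ i ∈ Finset.range N, (θ+1) * HoppeAux.hp θ i := Finset.sum_le_sum hterm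
      _ = (θ+1) * lam := by rw [← Finset.mul_sum]
  have hlog2 : Real.log ((N:ℝ)+2) ≤ 2 * Real.log ((N:ℝ)+1) := by
    have hsq : ((N:ℝ)+2) ≤ ((N:ℝ)+1)^2 := by nlinarith
    calc Real.log ((N:ℝ)+2) ≤ Real.log (((N:ℝ)+1)^2) :=
          Real.log_le_log (by positivity) hsq
      _ = 2 * Real.log ((N:ℝ)+1) := by
          rw [Real.log_pow]
          push_cast
          ring
  have hchain : Real.log ((N:ℝ)+2) ≤ (1+lam) * (2*(θ+1)) := by
    nlinarith
  refine le_trans htv ?_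
  rw [hcast, div_le_div_iff₀ hν hlog_pos]
  have hpos : (0:ℝ) ≤ 1 + 1/θ := by positivity
  nlinarith [mul_le_mul_of_nonneg_left hchain hpos]

end
end

section
/- For every θ > 0, the sequence (I_n^{(θ)} − E[I_n^{(θ)}])/(θ + n − 1), indexed by n ≥ 1, is a zero-mean martingale with respect to the natural filtration generated by the growth of the Hoppe tree; equivalently, Z_n := I_n^{(θ)}/(θ+n−1) − Σ_{i=1}^{n−1} 1/(θ+i) satisfies E[Z_n | F_{n−1}] = Z_{n−1} almost surely for all n ≥ 2 and E[Z_n] = 0 for all n ≥ 1, where F_{n−1} is the σ-field generated by the parent choices of nodes 2, …, n−1. -/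
open MeasureTheory ProbabilityTheory Real Filter Topology

noncomputable section

/-! ### Auxiliary lemmas -/

/-- The σ-algebra generated by the parent choices `U 0, …, U (m-1)`. -/
def hoppeFilt {Ω : Type*} (U : ℕ → Ω → ℕ) (m : ℕ) : MeasurableSpace Ω :=
  ⨆ k ∈ Finset.range m, MeasurableSpace.comap (U k) ⊤

lemma hoppeDepth_le {Ω : Type*} (U : ℕ → Ω → ℕ) (ω : Ω) : ∀ i, hoppeDepth U ω i ≤ i := by
  intro i
  induction i using Nat.strong_induction_on with
  | _ i ih =>
    match i with
    | 0 => simp [hoppeDepth]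
    | 1 => simp [hoppeDepth]
    | n + 2 =>
      have h1 : min (U n ω) (n + 1) ≤ n + 1 := min_le_right _ _
      have h2 := ih (min (U n ω) (n + 1)) (by omega)
      simp only [hoppeDepth]
      omega

lemma hoppeDepth_measurable {Ω : Type*} [MeasurableSpace Ω] (U : ℕ → Ω → ℕ) (n : ℕ) :
    ∀ i, i ≤ n + 1 → Measurable[⨆ k ∈ Finset.range n, MeasurableSpace.comap (U k) ⊤]
      (fun ω => hoppeDepth U ω i) := by
  intro i
  induction i using Nat.strong_induction_on with
  | _ i ih =>
    match i with
    | 0 => intro _; simp only [hoppeDepth]; exact measurable_const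
    | 1 => intro _; simp only [hoppeDepth]; exact measurable_const
    | j + 2 =>
      intro hj
      have hkey : (fun ω => hoppeDepth U ω (j + 2)) =
          fun ω => (∑ v ∈ Finset.range (j + 2),
            Set.indicator {ω' | min (U j ω') (j + 1) = v} (fun ω' => hoppeDepth U ω' v) ω) + 1 := by
        funext ω
        simp only [hoppeDepth]
        congr 1
        have hmem : min (U j ω) (j + 1) ∈ Finset.range (j + 2) := by
          have := min_le_right (U j ω) (j + 1)
          simp only [Finset.mem_range]; omega
        rw [Finset.sum_eq_single (min (U j ω) (j + 1))]
        · simp [Set.indicator]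
        · intro v _ hv
          simp only [Set.indicator, Set.mem_setOf_eq]
          rw [if_neg (by exact fun h => hv h.symm)]
        · intro h; exact absurd hmem h
      rw [hkey]
      refine Measurable.fun_add ?_ measurable_const
      refine Finset.measurable_sum _ fun v hv => ?_
      have hvle : v ≤ j + 1 := by simpa [Nat.lt_succ_iff] using Finset.mem_range.mp hv
      refine Measurable.indicator (ih v (by omega) (by omega)) ?_
      have hle : MeasurableSpace.comap (U j) ⊤ ≤
          ⨆ k ∈ Finset.range n, MeasurableSpace.comap (U k) ⊤ :=
        le_iSup₂ (f := fun k (_ : k ∈ Finset.range n) => MeasurableSpace.comap (U k) ⊤) j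
          (Finset.mem_range.mpr (by omega))
      exact hle _ ⟨{x | min x (j + 1) = v}, trivial, rfl⟩

lemma hoppe_indep_step {Ω : Type*} [MeasurableSpace Ω] {μ : Measure Ω} [IsProbabilityMeasure μ]
    {U : ℕ → Ω → ℕ} (hmeas : ∀ k, Measurable (U k))
    (hindep : iIndepFun U μ) (m : ℕ) :
    Indep (⨆ k ∈ Finset.range m, MeasurableSpace.comap (U k) ⊤)
      (MeasurableSpace.comap (U m) ⊤) μ := by
  have h := ProbabilityTheory.indep_biSup_compl (fun k => (hmeas k).comap_le) hindep {k | k < m}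
  have h2 : MeasurableSpace.comap (U m) ⊤ ≤ ⨆ k ∈ {k | k < m}ᶜ, MeasurableSpace.comap (U k) ⊤ :=
    le_iSup₂ (f := fun k (_ : k ∈ {k : ℕ | k < m}ᶜ) => MeasurableSpace.comap (U k) ⊤) m
      (by simp)
  have h3 := indep_of_indep_of_le_right h h2
  simp only [Set.mem_setOf_eq, Finset.mem_range] at h3 ⊢
  exact h3

lemma hoppePathLength_le {Ω : Type*} (U : ℕ → Ω → ℕ) (ω : Ω) (n : ℕ) :
    hoppePathLength U ω n ≤ n * n := by
  show (∑ i ∈ Finset.Icc 1 n, hoppeDepth U ω i) ≤ n * n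
  calc ∑ i ∈ Finset.Icc 1 n, hoppeDepth U ω i ≤ ∑ i ∈ Finset.Icc 1 n, n :=
      Finset.sum_le_sum fun i hi => (hoppeDepth_le U ω i).trans (Finset.mem_Icc.mp hi).2
    _ = (Finset.Icc 1 n).card * n := by rw [Finset.sum_const, smul_eq_mul]
    _ ≤ n * n := by
        have : (Finset.Icc 1 n).card ≤ n := by rw [Nat.card_Icc]; omega
        exact Nat.mul_le_mul_right _ this

/-- The one-step conditional expectation identity for the normalized path length. -/
lemma hoppe_step {Ω : Type*} [mΩ : MeasurableSpace Ω] (θ : ℝ) (hθ : 0 < θ)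
    (μ : Measure Ω) [IsProbabilityMeasure μ] (U : ℕ → Ω → ℕ) (hU : IsHoppeParents θ μ U)
    (m : ℕ) :
    μ[(fun ω => (hoppePathLength U ω (m + 2) : ℝ) / (θ + ((m : ℝ) + 2) - 1)
        - ∑ i ∈ Finset.Icc 1 (m + 1), 1 / (θ + (i : ℝ)))
      | hoppeFilt U m]
    =ᵐ[μ] fun ω => (hoppePathLength U ω (m + 1) : ℝ) / (θ + ((m : ℝ) + 1) - 1)
        - ∑ i ∈ Finset.Icc 1 m, 1 / (θ + (i : ℝ)) := by
  have hMle : hoppeFilt U m ≤ mΩ := iSup₂_le fun k _ => (hU.meas k).comap_le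
  haveI : SigmaFinite (μ.trim hMle) := inferInstance
  have hθm : (0:ℝ) < θ + (m:ℝ) := by positivity
  have hθm1 : (0:ℝ) < θ + (m:ℝ) + 1 := by positivity
  -- measurability
  have hDmeasM : ∀ i, i ≤ m + 1 → Measurable[hoppeFilt U m] fun ω => ((hoppeDepth U ω i : ℝ)) := fun i hi =>
    (measurable_from_top (f := (Nat.cast : ℕ → ℝ))).comp (hoppeDepth_measurable U m i hi)
  have hDmeas : ∀ i, Measurable fun ω => ((hoppeDepth U ω i : ℝ)) := by
    intro i
    have h1 := hoppeDepth_measurable U i i (Nat.le_succ i)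
    have hle : (⨆ k ∈ Finset.range i, MeasurableSpace.comap (U k) ⊤) ≤ mΩ :=
      iSup₂_le fun k _ => (hU.meas k).comap_le
    exact (measurable_from_top (f := (Nat.cast : ℕ → ℝ))).comp (h1.mono hle le_rfl)
  have hInt : ∀ (f : Ω → ℝ) (C : ℝ), Measurable f → (∀ ω, |f ω| ≤ C) → Integrable f μ := by
    intro f C hf hC
    exact (integrable_const C).mono' hf.aestronglyMeasurable
      (Filter.Eventually.of_forall fun ω => by simpa [Real.norm_eq_abs] using hC ω)
  have hFrepr : ∀ n : ℕ, (fun ω => (hoppePathLength U ω n : ℝ)) =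
      fun ω => ∑ i ∈ Finset.Icc 1 n, (hoppeDepth U ω i : ℝ) := by
    intro n; funext ω; simp [hoppePathLength]
  have hFmeasM : Measurable[hoppeFilt U m] fun ω => ((hoppePathLength U ω (m + 1) : ℝ)) := by
    rw [hFrepr]
    exact Finset.measurable_sum _ fun i hi => hDmeasM i (Finset.mem_Icc.mp hi).2
  have hFmeas : ∀ n, Measurable fun ω => ((hoppePathLength U ω n : ℝ)) := by
    intro n
    rw [hFrepr]
    exact Finset.measurable_sum _ fun i _ => hDmeas i
  have hFint : ∀ n, Integrable (fun ω => ((hoppePathLength U ω n : ℝ))) μ := by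
    intro n
    refine hInt _ (n * n) (hFmeas n) fun ω => ?_
    rw [abs_of_nonneg (Nat.cast_nonneg _)]
    exact_mod_cast hoppePathLength_le U ω n
  -- independence
  have hindpair : Indep (hoppeFilt U m) (MeasurableSpace.comap (U m) ⊤) μ :=
    hoppe_indep_step hU.meas hU.indep m
  -- indicator machinery
  have hsetmeas : ∀ j : ℕ, MeasurableSet {ω' | U m ω' = j} := fun j =>
    hU.meas m (MeasurableSpace.measurableSet_top (s := ({j} : Set ℕ)))
  have hindint : ∀ j : ℕ,
      Integrable (Set.indicator {ω' | U m ω' = j} (fun _ => (1:ℝ))) μ := by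
    intro j
    refine hInt _ 1 (measurable_const.indicator (hsetmeas j)) fun ω => ?_
    by_cases h : ω ∈ {ω' | U m ω' = j} <;> simp [Set.indicator, h]
  have hprodint : ∀ j : ℕ,
      Integrable ((fun ω => (hoppeDepth U ω j : ℝ)) *
        Set.indicator {ω' | U m ω' = j} (fun _ => (1:ℝ))) μ := by
    intro j
    refine hInt _ j ((hDmeas j).mul (measurable_const.indicator (hsetmeas j))) fun ω => ?_
    rw [Pi.mul_apply, abs_mul]
    have h1 : |(hoppeDepth U ω j : ℝ)| ≤ j := by
      rw [abs_of_nonneg (Nat.cast_nonneg _)]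
      exact_mod_cast hoppeDepth_le U ω j
    have h2 : |Set.indicator {ω' | U m ω' = j} (fun _ => (1:ℝ)) ω| ≤ 1 := by
      by_cases h : ω ∈ {ω' | U m ω' = j} <;> simp [Set.indicator, h]
    calc |(hoppeDepth U ω j : ℝ)| * |Set.indicator {ω' | U m ω' = j} (fun _ => (1:ℝ)) ω|
        ≤ (j : ℝ) * 1 := by
          apply mul_le_mul h1 h2 (abs_nonneg _) (Nat.cast_nonneg _)
      _ = j := mul_one _
  -- conditional expectation of the indicator
  have hcondind : ∀ j : ℕ, μ[Set.indicator {ω' | U m ω' = j} (fun _ => (1:ℝ)) | hoppeFilt U m]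
      =ᵐ[μ] fun _ => (μ {ω' | U m ω' = j}).toReal := by
    intro j
    have hsm : StronglyMeasurable[MeasurableSpace.comap (U m) ⊤]
        (Set.indicator {ω' | U m ω' = j} fun _ => (1:ℝ)) :=
      stronglyMeasurable_const.indicator ⟨{j}, trivial, rfl⟩
    refine (condExp_indep_eq (hU.meas m).comap_le hMle hsm hindpair.symm).trans ?_
    refine Filter.EventuallyEq.of_eq (funext fun _ => ?_)
    rw [integral_indicator_const (1:ℝ) (hsetmeas j), smul_eq_mul, mul_one]
    rfl
  -- conditional expectation of each product term
  have hterm : ∀ j ∈ Finset.Icc 1 (m + 1),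
      μ[(fun ω => (hoppeDepth U ω j : ℝ)) *
          Set.indicator {ω' | U m ω' = j} (fun _ => (1:ℝ)) | hoppeFilt U m]
      =ᵐ[μ] fun ω => (hoppeDepth U ω j : ℝ) / (θ + (m:ℝ)) := by
    intro j hj
    obtain ⟨hj1, hj2⟩ := Finset.mem_Icc.mp hj
    rcases eq_or_lt_of_le hj1 with h1 | h2
    · -- j = 1, depth of root is zero
      have hz : ∀ ω, (hoppeDepth U ω j : ℝ) = 0 := fun ω => by
        rw [← h1]; simp [hoppeDepth]
      have hzero : ((fun ω => (hoppeDepth U ω j : ℝ)) *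
          Set.indicator {ω' | U m ω' = j} (fun _ => (1:ℝ))) = (0 : Ω → ℝ) := by
        funext ω; simp [hz ω]
      rw [hzero]
      simp only [condExp_zero]
      refine Filter.EventuallyEq.of_eq (funext fun ω => ?_)
      rw [hz ω, zero_div]
      rfl
    · have h2' : 2 ≤ j := h2
      refine (condExp_mul_of_stronglyMeasurable_left ((hDmeasM j hj2).stronglyMeasurable)
        (hprodint j) (hindint j)).trans ?_
      refine (Filter.EventuallyEq.mul Filter.EventuallyEq.rfl (hcondind j)).trans ?_
      refine Filter.EventuallyEq.of_eq (funext fun ω => ?_)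
      rw [hU.nonroot m j h2' hj2,
        ENNReal.toReal_ofReal (by positivity), Pi.mul_apply, mul_one_div]
  -- a.e. decomposition of the path length of the larger tree
  have hae : ∀ᵐ ω ∂μ, 1 ≤ U m ω ∧ U m ω ≤ m + 1 := by
    rw [ae_iff]
    have hms : MeasurableSet {ω | 1 ≤ U m ω ∧ U m ω ≤ m + 1} :=
      hU.meas m (MeasurableSpace.measurableSet_top (s := {x : ℕ | 1 ≤ x ∧ x ≤ m + 1}))
    exact (prob_compl_eq_zero_iff hms).mpr (hU.range m)
  have hdecomp : (fun ω => (hoppePathLength U ω (m + 2) : ℝ)) =ᵐ[μ]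
      (fun ω => (hoppePathLength U ω (m + 1) : ℝ)) + (fun _ => (1:ℝ)) +
        fun ω => ∑ j ∈ Finset.Icc 1 (m + 1), ((fun ω' => (hoppeDepth U ω' j : ℝ)) *
          Set.indicator {ω' | U m ω' = j} (fun _ => (1:ℝ))) ω := by
    filter_upwards [hae] with ω hω
    have hmin : min (U m ω) (m + 1) = U m ω := min_eq_left hω.2
    have hsum : ∑ j ∈ Finset.Icc 1 (m + 1), ((fun ω' => (hoppeDepth U ω' j : ℝ)) *
        Set.indicator {ω' | U m ω' = j} (fun _ => (1:ℝ))) ω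
        = (hoppeDepth U ω (U m ω) : ℝ) := by
      rw [Finset.sum_eq_single (U m ω)]
      · simp [Set.indicator]
      · intro j _ hj
        have hnm : ω ∉ {ω' | U m ω' = j} := fun h => hj (by exact h.symm ▸ rfl)
        simp [Set.indicator_of_notMem hnm]
      · intro h; exact absurd (Finset.mem_Icc.mpr ⟨hω.1, hω.2⟩) h
    have hPL : hoppePathLength U ω (m + 2)
        = hoppePathLength U ω (m + 1) + (hoppeDepth U ω (U m ω) + 1) := by
      show (∑ i ∈ Finset.Icc 1 (m + 2), hoppeDepth U ω i) = _
      rw [Finset.sum_Icc_succ_top (by omega)]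
      congr 1
      simp only [hoppeDepth, hmin]
    simp only [Pi.add_apply, hsum, hPL]
    push_cast
    ring
  -- conditional expectation of the path length
  have hA : μ[(fun ω => (hoppePathLength U ω (m + 2) : ℝ)) | hoppeFilt U m] =ᵐ[μ]
      fun ω => (hoppePathLength U ω (m + 1) : ℝ) + 1
        + (hoppePathLength U ω (m + 1) : ℝ) / (θ + (m:ℝ)) := by
    refine (condExp_congr_ae hdecomp).trans ?_
    have hg3 : (fun ω => ∑ j ∈ Finset.Icc 1 (m + 1), ((fun ω' => (hoppeDepth U ω' j : ℝ)) *
        Set.indicator {ω' | U m ω' = j} (fun _ => (1:ℝ))) ω)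
        = ∑ j ∈ Finset.Icc 1 (m + 1), ((fun ω' => (hoppeDepth U ω' j : ℝ)) *
        Set.indicator {ω' | U m ω' = j} (fun _ => (1:ℝ))) := by
      funext ω; simp [Finset.sum_apply]
    have hg3int : Integrable (fun ω => ∑ j ∈ Finset.Icc 1 (m + 1),
        ((fun ω' => (hoppeDepth U ω' j : ℝ)) *
          Set.indicator {ω' | U m ω' = j} (fun _ => (1:ℝ))) ω) μ :=
      integrable_finset_sum _ fun j _ => hprodint j
    refine (condExp_add ((hFint (m+1)).add (integrable_const 1)) hg3int _).trans ?_
    have hc1 : μ[(fun ω => (hoppePathLength U ω (m + 1) : ℝ)) + (fun _ => (1:ℝ)) | hoppeFilt U m]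
        =ᵐ[μ] (fun ω => (hoppePathLength U ω (m + 1) : ℝ)) + (fun _ => (1:ℝ)) := by
      refine (condExp_add (hFint (m+1)) (integrable_const 1) _).trans ?_
      rw [condExp_of_stronglyMeasurable hMle hFmeasM.stronglyMeasurable (hFint (m+1))]
      exact Filter.EventuallyEq.add Filter.EventuallyEq.rfl (Filter.EventuallyEq.of_eq (condExp_const (μ := μ) hMle (1:ℝ)))
    have hc2 : μ[(fun ω => ∑ j ∈ Finset.Icc 1 (m + 1),
        ((fun ω' => (hoppeDepth U ω' j : ℝ)) *
          Set.indicator {ω' | U m ω' = j} (fun _ => (1:ℝ))) ω) | hoppeFilt U m]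
        =ᵐ[μ] fun ω => (hoppePathLength U ω (m + 1) : ℝ) / (θ + (m:ℝ)) := by
      rw [hg3]
      refine (condExp_finsetSum (fun j _ => hprodint j) _).trans ?_
      refine (eventuallyEq_sum fun j hj => hterm j hj).trans ?_
      refine Filter.EventuallyEq.of_eq (funext fun ω => ?_)
      rw [Finset.sum_apply, ← Finset.sum_div]
      congr 1
      simp [hoppePathLength, Nat.cast_sum]
    refine (Filter.EventuallyEq.add hc1 hc2).trans ?_
    refine Filter.EventuallyEq.of_eq (funext fun ω => ?_)
    simp only [Pi.add_apply]
  -- put everything together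
  have e1 : (fun ω => (hoppePathLength U ω (m + 2) : ℝ) / (θ + ((m:ℝ) + 2) - 1)
      - ∑ i ∈ Finset.Icc 1 (m + 1), 1 / (θ + (i:ℝ)))
      = (θ + (m:ℝ) + 1)⁻¹ • (fun ω => (hoppePathLength U ω (m + 2) : ℝ))
        - fun _ => ∑ i ∈ Finset.Icc 1 (m + 1), 1 / (θ + (i:ℝ)) := by
    funext ω
    simp only [Pi.sub_apply, Pi.smul_apply, smul_eq_mul]
    rw [inv_mul_eq_div]
    ring_nf
  rw [e1]
  refine (condExp_sub ((hFint (m+2)).smul ((θ + (m:ℝ) + 1)⁻¹)) (integrable_const _) _).trans ?_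
  refine (Filter.EventuallyEq.sub (condExp_smul ((θ + (m:ℝ) + 1)⁻¹)
    (fun ω => (hoppePathLength U ω (m + 2) : ℝ)) _)
    (Filter.EventuallyEq.of_eq (condExp_const (μ := μ) hMle
      (∑ i ∈ Finset.Icc 1 (m + 1), 1 / (θ + (i:ℝ)))))).trans ?_
  refine (Filter.EventuallyEq.sub (Filter.EventuallyEq.const_smul hA ((θ + (m:ℝ) + 1)⁻¹))
    Filter.EventuallyEq.rfl).trans ?_
  have hsumsucc : ∑ i ∈ Finset.Icc 1 (m + 1), 1 / (θ + (i:ℝ))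
      = (∑ i ∈ Finset.Icc 1 m, 1 / (θ + (i:ℝ))) + 1 / (θ + (m:ℝ) + 1) := by
    rw [Finset.sum_Icc_succ_top (by omega)]
    push_cast
    ring
  refine Filter.EventuallyEq.of_eq (funext fun ω => ?_)
  simp only [Pi.sub_apply, Pi.smul_apply, smul_eq_mul]
  rw [hsumsucc]
  have h1 : θ + ((m:ℝ) + 1) - 1 = θ + (m:ℝ) := by ring
  rw [h1]
  field_simp
  ring

lemma hoppePathLength_real_measurable {Ω : Type*} [mΩ : MeasurableSpace Ω]
    {U : ℕ → Ω → ℕ} (hmeas : ∀ k, Measurable (U k)) (n : ℕ) :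
    Measurable fun ω => ((hoppePathLength U ω n : ℝ)) := by
  have hD : ∀ i, Measurable fun ω => ((hoppeDepth U ω i : ℝ)) := by
    intro i
    have h1 := hoppeDepth_measurable U i i (Nat.le_succ i)
    have hle : (⨆ k ∈ Finset.range i, MeasurableSpace.comap (U k) ⊤) ≤ mΩ :=
      iSup₂_le fun k _ => (hmeas k).comap_le
    exact (measurable_from_top (f := (Nat.cast : ℕ → ℝ))).comp (h1.mono hle le_rfl)
  have : (fun ω => (hoppePathLength U ω n : ℝ))
      = fun ω => ∑ i ∈ Finset.Icc 1 n, (hoppeDepth U ω i : ℝ) := by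
    funext ω; simp [hoppePathLength]
  rw [this]
  exact Finset.measurable_sum _ fun i _ => hD i

lemma hoppePathLength_integrable {Ω : Type*} [mΩ : MeasurableSpace Ω] {μ : Measure Ω}
    [IsFiniteMeasure μ] {U : ℕ → Ω → ℕ} (hmeas : ∀ k, Measurable (U k)) (n : ℕ) :
    Integrable (fun ω => (hoppePathLength U ω n : ℝ)) μ := by
  refine (integrable_const ((n * n : ℕ) : ℝ)).mono'
    (hoppePathLength_real_measurable hmeas n).aestronglyMeasurable
    (Filter.Eventually.of_forall fun ω => ?_)
  rw [Real.norm_eq_abs, abs_of_nonneg (Nat.cast_nonneg _)]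
  exact_mod_cast hoppePathLength_le U ω n

/-- The normalized internal path length
`Z_n = I_n/(θ+n-1) - ∑_{i=1}^{n-1} 1/(θ+i)` of a Hoppe tree is a zero-mean martingale:
`E[Z_n] = 0` for all `n ≥ 1` and `E[Z_n | F_{n-1}] = Z_{n-1}` a.s. for all `n ≥ 2`,
where `F_{n-1}` is the σ-field generated by the parent choices of nodes `2, …, n-1`
(that is, by `U 0, …, U (n-3)`). -/
theorem hoppe_path_length_martingale
    {Ω : Type*} [MeasurableSpace Ω]
    (θ : ℝ) (hθ : 0 < θ)
    (μ : Measure Ω) [IsProbabilityMeasure μ] (U : ℕ → Ω → ℕ) (hU : IsHoppeParents θ μ U) :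
    (∀ n : ℕ, 1 ≤ n →
      ∫ ω, ((hoppePathLength U ω n : ℝ) / (θ + (n : ℝ) - 1)
        - ∑ i ∈ Finset.Icc 1 (n - 1), 1 / (θ + i)) ∂μ = 0)
    ∧ ∀ n : ℕ, 2 ≤ n →
      μ[fun ω => (hoppePathLength U ω n : ℝ) / (θ + (n : ℝ) - 1)
          - ∑ i ∈ Finset.Icc 1 (n - 1), 1 / (θ + i)
        | ⨆ k ∈ Finset.range (n - 2), MeasurableSpace.comap (U k) ⊤]
      =ᵐ[μ] fun ω => (hoppePathLength U ω (n - 1) : ℝ) / (θ + ((n : ℝ) - 1) - 1)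
          - ∑ i ∈ Finset.Icc 1 (n - 1 - 1), 1 / (θ + i) := by
  have hstep : ∀ n : ℕ, 2 ≤ n →
      μ[fun ω => (hoppePathLength U ω n : ℝ) / (θ + (n : ℝ) - 1)
          - ∑ i ∈ Finset.Icc 1 (n - 1), 1 / (θ + i)
        | ⨆ k ∈ Finset.range (n - 2), MeasurableSpace.comap (U k) ⊤]
      =ᵐ[μ] fun ω => (hoppePathLength U ω (n - 1) : ℝ) / (θ + ((n : ℝ) - 1) - 1)
          - ∑ i ∈ Finset.Icc 1 (n - 1 - 1), 1 / (θ + i) := by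
    intro n hn
    obtain ⟨m, rfl⟩ : ∃ m, n = m + 2 := ⟨n - 2, by omega⟩
    have h := hoppe_step θ hθ μ U hU m
    have e2 : (fun ω => (hoppePathLength U ω (m + 2) : ℝ) / (θ + ((m + 2 : ℕ) : ℝ) - 1)
        - ∑ i ∈ Finset.Icc 1 (m + 2 - 1), 1 / (θ + (i:ℝ)))
        = fun ω => (hoppePathLength U ω (m + 2) : ℝ) / (θ + ((m:ℝ) + 2) - 1)
        - ∑ i ∈ Finset.Icc 1 (m + 1), 1 / (θ + (i:ℝ)) := by
      funext ω; push_cast; ring_nf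
    have e3 : (fun ω => (hoppePathLength U ω (m + 2 - 1) : ℝ) / (θ + (((m + 2 : ℕ) : ℝ) - 1) - 1)
        - ∑ i ∈ Finset.Icc 1 (m + 2 - 1 - 1), 1 / (θ + (i:ℝ)))
        = fun ω => (hoppePathLength U ω (m + 1) : ℝ) / (θ + ((m:ℝ) + 1) - 1)
        - ∑ i ∈ Finset.Icc 1 m, 1 / (θ + (i:ℝ)) := by
      funext ω; push_cast; ring_nf
    rw [show m + 2 - 2 = m from rfl, e2, e3]
    exact h
  refine ⟨?_, hstep⟩
  intro n hn
  induction n, hn using Nat.le_induction with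
  | base =>
    have hPL1 : ∀ ω : Ω, hoppePathLength U ω 1 = 0 := fun ω => by
      simp [hoppePathLength, hoppeDepth]
    have hz : (fun ω : Ω => ((hoppePathLength U ω 1 : ℝ) / (θ + ((1:ℕ) : ℝ) - 1)
        - ∑ i ∈ Finset.Icc 1 (1 - 1 : ℕ), 1 / (θ + (i:ℝ)))) = fun _ => (0:ℝ) := by
      funext ω
      rw [hPL1 ω]
      norm_num
    rw [hz]
    exact integral_zero Ω ℝ
  | succ n hn ih =>
    obtain ⟨p, rfl⟩ : ∃ p, n = p + 1 := ⟨n - 1, by omega⟩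
    rw [show p + 1 + 1 = p + 2 from rfl]
    have hMle : (⨆ k ∈ Finset.range (p + 2 - 2), MeasurableSpace.comap (U k) ⊤)
        ≤ (inferInstance : MeasurableSpace Ω) := iSup₂_le fun k _ => (hU.meas k).comap_le
    haveI : SigmaFinite (μ.trim hMle) := inferInstance
    have h1 : ∫ ω, (μ[fun ω' => (hoppePathLength U ω' (p + 2) : ℝ)
          / (θ + ((p + 2 : ℕ) : ℝ) - 1) - ∑ i ∈ Finset.Icc 1 (p + 2 - 1), 1 / (θ + (i:ℝ))
          | ⨆ k ∈ Finset.range (p + 2 - 2), MeasurableSpace.comap (U k) ⊤]) ω ∂μ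
        = ∫ ω, ((hoppePathLength U ω (p + 2) : ℝ)
          / (θ + ((p + 2 : ℕ) : ℝ) - 1) - ∑ i ∈ Finset.Icc 1 (p + 2 - 1), 1 / (θ + (i:ℝ))) ∂μ :=
      integral_condExp hMle
    have h2 := integral_congr_ae (hstep (p + 2) (by omega))
    have e5 : (fun ω => (hoppePathLength U ω (p + 2 - 1) : ℝ)
        / (θ + (((p + 2 : ℕ) : ℝ) - 1) - 1) - ∑ i ∈ Finset.Icc 1 (p + 2 - 1 - 1), 1 / (θ + (i:ℝ)))
        = fun ω => (hoppePathLength U ω (p + 1) : ℝ) / (θ + ((p + 1 : ℕ) : ℝ) - 1)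
        - ∑ i ∈ Finset.Icc 1 (p + 1 - 1), 1 / (θ + (i:ℝ)) := by
      funext ω; push_cast; ring_nf
    rw [← h1, h2, e5]
    exact ih

end
end
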